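/- arXiv:2305.02250 — 2 statements merged into one kernel-verified Lean document; each statement's English description precedes it below -/
import Mathlib

section
/- Let ν be a lattice path, δ an increment vector for ν, T a (δ,ν)-tree with row vector r(T) = (r_0, …, r_n), and ℓ ≥ 1. The number of left intervals of length ℓ in the rotation poset of (δ,ν)-trees with bottom element T is equal to |{0 ≤ i ≤ n−1 : r_i ≥ ℓ}|. -/
/-!
Common definitions for the paper "The alt ν-Tamari lattices".

A lattice path ν from (0,0) to (m,n) is encoded as the list (ν_0, ..., ν_n)
of its east-step block lengths (ν_0 initial east steps, ν_i the east steps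
immediately following the i-th north step).  Thus `ν.length = n + 1` and
`ν.sum = m`.
-/

/-- `μ` is a ν-path: same endpoints as `ν` and weakly above `ν`. -/
def IsNuPath (ν μ : List ℕ) : Prop :=
  μ.length = ν.length ∧ (∀ j : ℕ, (μ.take j).sum ≤ (ν.take j).sum) ∧ μ.sum = ν.sum

/-! ### The ν-Dyck lattice -/

/-- The Dyck order: `P ≤ Q` iff `Q` lies weakly above `P`. -/
def dyckLE (P Q : List ℕ) : Prop := ∀ j : ℕ, (Q.take j).sum ≤ (P.take j).sum

/-- Covering relation of the ν-Dyck lattice. -/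
def dyckCovBy (ν P Q : List ℕ) : Prop :=
  IsNuPath ν P ∧ IsNuPath ν Q ∧ dyckLE P Q ∧ P ≠ Q ∧
    ∀ R, IsNuPath ν R → dyckLE P R → dyckLE R Q → R = P ∨ R = Q

/-- `[P,Q]` is a linear interval of length `ℓ` in the ν-Dyck lattice:
the interval is totally ordered and there is a maximal chain of length `ℓ`
from `P` to `Q`. -/
def IsDyckLinear (ν P Q : List ℕ) (ℓ : ℕ) : Prop :=
  IsNuPath ν P ∧ IsNuPath ν Q ∧ dyckLE P Q ∧
  (∀ R S, IsNuPath ν R → IsNuPath ν S → dyckLE P R → dyckLE R Q →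
    dyckLE P S → dyckLE S Q → dyckLE R S ∨ dyckLE S R) ∧
  ∃ c : ℕ → List ℕ, c 0 = P ∧ c ℓ = Q ∧ ∀ k, k < ℓ → dyckCovBy ν (c k) (c (k + 1))

/-- `[P,Q]` is a left interval in the ν-Dyck lattice: `Q` is obtained from `P`
by replacing a consecutive subword `E^ℓ N` by `N E^ℓ` (the `ℓ` east steps are
moved from the block before the `(i+1)`-st north step to the block after it). -/
def IsLeftDyck (ν P Q : List ℕ) (ℓ : ℕ) : Prop :=
  IsNuPath ν P ∧ IsNuPath ν Q ∧ 1 ≤ ℓ ∧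
  ∃ i, i + 1 < P.length ∧ ℓ ≤ P.getD i 0 ∧
    Q = (P.set i (P.getD i 0 - ℓ)).set (i + 1) (P.getD (i + 1) 0 + ℓ)

/-- `[P,Q]` is a right interval in the ν-Dyck lattice: `Q` is obtained from `P`
by replacing a consecutive subword `E N^ℓ` by `N^ℓ E`. -/
def IsRightDyck (ν P Q : List ℕ) (ℓ : ℕ) : Prop :=
  IsNuPath ν P ∧ IsNuPath ν Q ∧ 1 ≤ ℓ ∧
  ∃ i, i + ℓ < P.length ∧ 1 ≤ P.getD i 0 ∧ (∀ j, i < j → j < i + ℓ → P.getD j 0 = 0) ∧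
    Q = (P.set i (P.getD i 0 - 1)).set (i + ℓ) (P.getD (i + ℓ) 0 + 1)

/-! ### Increment vectors, δ-rotations and alt ν-Tamari posets -/

/-- `δ = (δ_1, …, δ_n)` is an increment vector with respect to `ν`:
`δ_i ≤ ν_i` for `1 ≤ i ≤ n`.  (List index `i` of `δ` holds `δ_{i+1}`.) -/
def IsIncrement (ν δ : List ℕ) : Prop :=
  δ.length + 1 = ν.length ∧ ∀ i, i < δ.length → δ.getD i 0 ≤ ν.getD (i + 1) 0

/-- `μ'` is the δ-rotation of `μ` at the valley preceding the `(i+1)`-st north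
step.  The δ-excursion starting with the `(i+1)`-st north step ends in block `k`
(the first block where the δ-altitude returns to its value at the valley), and
the east step of the valley is exchanged with this excursion, i.e. moved from
block `i` to block `k`. -/
def IsDeltaRotation (δ μ μ' : List ℕ) (i : ℕ) : Prop :=
  i + 1 < μ.length ∧ 1 ≤ μ.getD i 0 ∧
  ∃ k, i < k ∧ k < μ.length ∧
    (∑ t ∈ Finset.Ico i k, δ.getD t 0) ≤ (∑ t ∈ Finset.Ico (i + 1) (k + 1), μ.getD t 0) ∧
    (∀ k', i < k' → k' < k →
      (∑ t ∈ Finset.Ico (i + 1) (k' + 1), μ.getD t 0) < (∑ t ∈ Finset.Ico i k', δ.getD t 0)) ∧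
    μ' = (μ.set i (μ.getD i 0 - 1)).set k (μ.getD k 0 + 1)

/-- `Q` is obtained from `P` by a δ-rotation at some valley. -/
def DRot (δ P Q : List ℕ) : Prop := ∃ i, IsDeltaRotation δ P Q i

/-- The alt ν-Tamari order: reflexive transitive closure of δ-rotations. -/
def altLE (δ : List ℕ) : List ℕ → List ℕ → Prop := Relation.ReflTransGen (DRot δ)

/-- The path ν̌ = (ν̌_0, δ_1, …, δ_n) with ν̌_0 = Σν_i − Σδ_i. -/
def nuCheck (ν δ : List ℕ) : List ℕ := (ν.sum - δ.sum) :: δ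

/-- `μ'` is the ω-rotation (in the sense of the ν-Tamari lattice, defined via
the ω-altitude `alt_ω(x,y) = ω_0 + ⋯ + ω_y − x`) of `μ` at the valley preceding
the `(i+1)`-st north step: the east step of the valley is exchanged with the
subpath from the valley to the next lattice point of the same ω-altitude,
which ends in block `k`. -/
def IsNuRotation (ω μ μ' : List ℕ) (i : ℕ) : Prop :=
  i + 1 < μ.length ∧ 1 ≤ μ.getD i 0 ∧
  ∃ k, i < k ∧ k < μ.length ∧
    (ω.take (k + 1)).sum + (μ.take (i + 1)).sum ≤
      (ω.take (i + 1)).sum + (μ.take (k + 1)).sum ∧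
    (∀ k', i < k' → k' < k →
      (ω.take (i + 1)).sum + (μ.take (k' + 1)).sum <
        (ω.take (k' + 1)).sum + (μ.take (i + 1)).sum) ∧
    μ' = (μ.set i (μ.getD i 0 - 1)).set k (μ.getD k 0 + 1)

/-- The ω-Tamari order on ω-paths: closure of ω-rotations. -/
def tamLE (ω : List ℕ) : List ℕ → List ℕ → Prop :=
  Relation.ReflTransGen (fun P Q => ∃ i, IsNuRotation ω P Q i)

/-- Covering relation of the alt ν-Tamari poset `T_ν(δ)`. -/
def altCovBy (ν δ P Q : List ℕ) : Prop :=
  IsNuPath ν P ∧ IsNuPath ν Q ∧ altLE δ P Q ∧ P ≠ Q ∧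
    ∀ R, IsNuPath ν R → altLE δ P R → altLE δ R Q → R = P ∨ R = Q

/-- `[P,Q]` is a linear interval of length `ℓ` in the alt ν-Tamari poset. -/
def IsAltLinear (ν δ P Q : List ℕ) (ℓ : ℕ) : Prop :=
  IsNuPath ν P ∧ IsNuPath ν Q ∧ altLE δ P Q ∧
  (∀ R S, IsNuPath ν R → IsNuPath ν S → altLE δ P R → altLE δ R Q →
    altLE δ P S → altLE δ S Q → altLE δ R S ∨ altLE δ S R) ∧
  ∃ c : ℕ → List ℕ, c 0 = P ∧ c ℓ = Q ∧ ∀ k, k < ℓ → altCovBy ν δ (c k) (c (k + 1))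

/-! ### ω-trees -/

/-- The lattice points of the Ferrers diagram `F_ω` weakly above `ω`:
points `(x,y)` with `0 ≤ y ≤ n` and `x ≤ ω_0 + ⋯ + ω_y`. -/
def Lpts (ω : List ℕ) : Set (ℕ × ℕ) :=
  {p : ℕ × ℕ | p.2 < ω.length ∧ p.1 ≤ (ω.take (p.2 + 1)).sum}

/-- `p` and `q` are ω-incompatible: one is strictly southwest of the other and
the smallest rectangle containing them lies in `F_ω` (equivalently, its
bottom-right corner is a lattice point of `F_ω`). -/
def Incomp (ω : List ℕ) (p q : ℕ × ℕ) : Prop :=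
  ((p.1 < q.1 ∧ p.2 < q.2) ∨ (q.1 < p.1 ∧ q.2 < p.2)) ∧
    (max p.1 q.1, min p.2 q.2) ∈ Lpts ω

/-- All elements of `T` are pairwise ω-compatible. -/
def PairwiseCompat (ω : List ℕ) (T : Set (ℕ × ℕ)) : Prop :=
  ∀ p ∈ T, ∀ q ∈ T, ¬ Incomp ω p q

/-- An ω-tree: a maximal collection of pairwise ω-compatible points of `L_ω`. -/
def IsTree (ω : List ℕ) (T : Set (ℕ × ℕ)) : Prop :=
  T ⊆ Lpts ω ∧ PairwiseCompat ω T ∧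
    ∀ T', T ⊆ T' → T' ⊆ Lpts ω → PairwiseCompat ω T' → T' = T

/-- The ω-rotation of `T` at `q`: there are `p, r ∈ T` with `q` the lower-left
corner of the rectangle `p□r` (so `p` is above `q` in its column and `r` to the
right of `q` in its row), no other element of `T` lies in `p□r`, and `T'` is
obtained by replacing `q` by the upper-right corner of `p□r`. -/
def RotationAt (ω : List ℕ) (T : Set (ℕ × ℕ)) (q : ℕ × ℕ) (T' : Set (ℕ × ℕ)) : Prop :=
  ∃ p r, p ∈ T ∧ q ∈ T ∧ r ∈ T ∧ p.1 = q.1 ∧ q.2 < p.2 ∧ r.2 = q.2 ∧ q.1 < r.1 ∧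
    (∀ s ∈ T, q.1 ≤ s.1 → s.1 ≤ r.1 → q.2 ≤ s.2 → s.2 ≤ p.2 → s = p ∨ s = q ∨ s = r) ∧
    T' = insert (r.1, p.2) (T \ {q})

/-- `T'` is obtained from `T` by an ω-rotation. -/
def TreeRotation (ω : List ℕ) (T T' : Set (ℕ × ℕ)) : Prop := ∃ q, RotationAt ω T q T'

/-- One rotation step between ω-trees. -/
def tRot (ω : List ℕ) (T T' : Set (ℕ × ℕ)) : Prop :=
  IsTree ω T ∧ IsTree ω T' ∧ TreeRotation ω T T'

/-- The rotation order on ω-trees. -/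
def treeLE (ω : List ℕ) : Set (ℕ × ℕ) → Set (ℕ × ℕ) → Prop :=
  Relation.ReflTransGen (tRot ω)

/-- Covering relation of the rotation poset of ω-trees. -/
def treeCovBy (ω : List ℕ) (T T' : Set (ℕ × ℕ)) : Prop :=
  IsTree ω T ∧ IsTree ω T' ∧ treeLE ω T T' ∧ T ≠ T' ∧
    ∀ R, IsTree ω R → treeLE ω T R → treeLE ω R T' → R = T ∨ R = T'

/-- `[T,T']` is a linear interval of length `ℓ` in the rotation poset of ω-trees. -/
def IsTreeLinear (ω : List ℕ) (T T' : Set (ℕ × ℕ)) (ℓ : ℕ) : Prop :=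
  IsTree ω T ∧ IsTree ω T' ∧ treeLE ω T T' ∧
  (∀ R S, IsTree ω R → IsTree ω S → treeLE ω T R → treeLE ω R T' →
    treeLE ω T S → treeLE ω S T' → treeLE ω R S ∨ treeLE ω S R) ∧
  ∃ c : ℕ → Set (ℕ × ℕ), c 0 = T ∧ c ℓ = T' ∧ ∀ k, k < ℓ → treeCovBy ω (c k) (c (k + 1))

/-- `q 0, …, q ℓ` is a sequence of consecutive nodes of `T` in the same row,
ordered from left to right. -/
def ConsecRow (T : Set (ℕ × ℕ)) (q : ℕ → ℕ × ℕ) (ℓ : ℕ) : Prop :=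
  (∀ i, i ≤ ℓ → q i ∈ T) ∧ (∀ i, i ≤ ℓ → (q i).2 = (q 0).2) ∧
  (∀ i, i < ℓ → (q i).1 < (q (i + 1)).1) ∧
  (∀ i, i < ℓ → ∀ s ∈ T, s.2 = (q 0).2 → (q i).1 < s.1 → s.1 < (q (i + 1)).1 → False)

/-- `q 0, …, q ℓ` is a sequence of consecutive nodes of `T` in the same column,
ordered from bottom to top. -/
def ConsecCol (T : Set (ℕ × ℕ)) (q : ℕ → ℕ × ℕ) (ℓ : ℕ) : Prop :=
  (∀ i, i ≤ ℓ → q i ∈ T) ∧ (∀ i, i ≤ ℓ → (q i).1 = (q 0).1) ∧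
  (∀ i, i < ℓ → (q i).2 < (q (i + 1)).2) ∧
  (∀ i, i < ℓ → ∀ s ∈ T, s.1 = (q 0).1 → (q i).2 < s.2 → s.2 < (q (i + 1)).2 → False)

/-- `[T,T']` is a left interval of length `ℓ` in the rotation poset of ω-trees:
`T'` is obtained from `T` by applying `ℓ > 0` successive rotations at the first
`ℓ` nodes of a sequence `q 0, …, q ℓ` of consecutive nodes of `T` in the same
row, from left to right. -/
def IsLeftTreeItv (ω : List ℕ) (T T' : Set (ℕ × ℕ)) (ℓ : ℕ) : Prop :=
  IsTree ω T ∧ 1 ≤ ℓ ∧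
  ∃ q : ℕ → ℕ × ℕ, ConsecRow T q ℓ ∧
    ∃ c : ℕ → Set (ℕ × ℕ), c 0 = T ∧ c ℓ = T' ∧
      ∀ k, k < ℓ → RotationAt ω (c k) (q k) (c (k + 1))

/-- `[T,T']` is a right interval of length `ℓ` in the rotation poset of ω-trees:
`T'` is obtained from `T` by applying `ℓ > 0` successive rotations at the first
`ℓ` nodes of a sequence `q 0, …, q ℓ` of consecutive nodes of `T` in the same
column, from bottom to top. -/
def IsRightTreeItv (ω : List ℕ) (T T' : Set (ℕ × ℕ)) (ℓ : ℕ) : Prop :=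
  IsTree ω T ∧ 1 ≤ ℓ ∧
  ∃ q : ℕ → ℕ × ℕ, ConsecCol T q ℓ ∧
    ∃ c : ℕ → Set (ℕ × ℕ), c 0 = T ∧ c ℓ = T' ∧
      ∀ k, k < ℓ → RotationAt ω (c k) (q k) (c (k + 1))

/-! ### (δ,ν)-trees -/

/-- The lattice points `L_{δ,ν}` of the shape `F_{δ,ν}`: points of `L_ν̌` lying
weakly above the path ν̂ = W^{ν_0} N W^{ν_1−δ_1} ⋯ N W^{ν_n−δ_n} starting at
`(ν̌_0, 0)`.  At height `y` these are the `x` with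
`ν̌_0 − ν_0 − Σ_{i≤y}(ν_i−δ_i) ≤ x ≤ ν̌_0 + δ_1 + ⋯ + δ_y`, written here without
natural subtraction. -/
def Ldn (ν δ : List ℕ) : Set (ℕ × ℕ) :=
  {p : ℕ × ℕ | p.2 < ν.length ∧
    ν.sum ≤ p.1 + (ν.take (p.2 + 1)).sum + (δ.drop p.2).sum ∧
    p.1 ≤ ((nuCheck ν δ).take (p.2 + 1)).sum}

/-- A (δ,ν)-tree: a maximal collection of pairwise ν̌-compatible points of `L_{δ,ν}`. -/
def IsDNTree (ν δ : List ℕ) (T : Set (ℕ × ℕ)) : Prop :=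
  T ⊆ Ldn ν δ ∧ PairwiseCompat (nuCheck ν δ) T ∧
    ∀ T', T ⊆ T' → T' ⊆ Ldn ν δ → PairwiseCompat (nuCheck ν δ) T' → T' = T

/-- One ν̌-rotation step between (δ,ν)-trees. -/
def dnRot (ν δ : List ℕ) (T T' : Set (ℕ × ℕ)) : Prop :=
  IsDNTree ν δ T ∧ IsDNTree ν δ T' ∧ TreeRotation (nuCheck ν δ) T T'

/-- The rotation order on (δ,ν)-trees. -/
def dnLE (ν δ : List ℕ) : Set (ℕ × ℕ) → Set (ℕ × ℕ) → Prop :=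
  Relation.ReflTransGen (dnRot ν δ)

/-- Covering relation of the rotation poset of (δ,ν)-trees. -/
def dnCovBy (ν δ : List ℕ) (T T' : Set (ℕ × ℕ)) : Prop :=
  IsDNTree ν δ T ∧ IsDNTree ν δ T' ∧ dnLE ν δ T T' ∧ T ≠ T' ∧
    ∀ R, IsDNTree ν δ R → dnLE ν δ T R → dnLE ν δ R T' → R = T ∨ R = T'

/-- `[T,T']` is a left interval of length `ℓ` in the rotation poset of (δ,ν)-trees. -/
def IsLeftDNItv (ν δ : List ℕ) (T T' : Set (ℕ × ℕ)) (ℓ : ℕ) : Prop :=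
  IsDNTree ν δ T ∧ 1 ≤ ℓ ∧
  ∃ q : ℕ → ℕ × ℕ, ConsecRow T q ℓ ∧
    ∃ c : ℕ → Set (ℕ × ℕ), c 0 = T ∧ c ℓ = T' ∧
      ∀ k, k < ℓ → RotationAt (nuCheck ν δ) (c k) (q k) (c (k + 1))

/-- `[T,T']` is a right interval of length `ℓ` in the rotation poset of (δ,ν)-trees. -/
def IsRightDNItv (ν δ : List ℕ) (T T' : Set (ℕ × ℕ)) (ℓ : ℕ) : Prop :=
  IsDNTree ν δ T ∧ 1 ≤ ℓ ∧
  ∃ q : ℕ → ℕ × ℕ, ConsecCol T q ℓ ∧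
    ∃ c : ℕ → Set (ℕ × ℕ), c 0 = T ∧ c ℓ = T' ∧
      ∀ k, k < ℓ → RotationAt (nuCheck ν δ) (c k) (q k) (c (k + 1))

/-! ### Row vectors, column vectors, reduced column vectors -/

/-- Number of points of `T` at height `y`. -/
noncomputable def rowN (T : Set (ℕ × ℕ)) (y : ℕ) : ℕ := {p ∈ T | p.2 = y}.ncard

/-- Number of points of `T` in column `x`. -/
noncomputable def colTN (T : Set (ℕ × ℕ)) (x : ℕ) : ℕ := {p ∈ T | p.1 = x}.ncard

/-- Number of points of `L_{δ,ν}` in column `x`. -/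
noncomputable def colN (ν δ : List ℕ) (x : ℕ) : ℕ := {p ∈ Ldn ν δ | p.1 = x}.ncard

/-- `p` is a relevant point of `L_{δ,ν}`: it is not the leftmost point of its row. -/
def Relevant (ν δ : List ℕ) (p : ℕ × ℕ) : Prop :=
  p ∈ Ldn ν δ ∧ ∃ q ∈ Ldn ν δ, q.2 = p.2 ∧ q.1 < p.1

/-- Number of relevant points of `L_{δ,ν}` in column `x` (the reduced column at `x`). -/
noncomputable def rcolN (ν δ : List ℕ) (x : ℕ) : ℕ := {p ∈ Ldn ν δ | p.1 = x ∧ Relevant ν δ p}.ncard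

/-- Number of points of `T` in the reduced column at `x`. -/
noncomputable def rcolTN (ν δ : List ℕ) (T : Set (ℕ × ℕ)) (x : ℕ) : ℕ :=
  {p ∈ T | p.1 = x ∧ Relevant ν δ p}.ncard

/-- `j` lists the columns `j 0, …, j m` of `L_{δ,ν}` from shortest to longest,
reading from right to left among columns of equal length (here `m = ν.sum`). -/
def ColOrder (ν δ : List ℕ) (j : ℕ → ℕ) : Prop :=
  (∀ i, i ≤ ν.sum → j i ≤ ν.sum) ∧
  (∀ i i', i ≤ ν.sum → i' ≤ ν.sum → j i = j i' → i = i') ∧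
  (∀ i i', i < i' → i' ≤ ν.sum →
    colN ν δ (j i) < colN ν δ (j i') ∨ (colN ν δ (j i) = colN ν δ (j i') ∧ j i' < j i))

/-- `j` lists the reduced columns `j 0, …, j (m-1)` of `L_{δ,ν}` from shortest to
longest, reading from right to left among reduced columns of equal length. -/
def RColOrder (ν δ : List ℕ) (j : ℕ → ℕ) : Prop :=
  (∀ i, i < ν.sum → 1 ≤ j i ∧ j i ≤ ν.sum) ∧
  (∀ i i', i < ν.sum → i' < ν.sum → j i = j i' → i = i') ∧
  (∀ i i', i < i' → i' < ν.sum →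
    rcolN ν δ (j i) < rcolN ν δ (j i') ∨ (rcolN ν δ (j i) = rcolN ν δ (j i') ∧ j i' < j i))

/-- The entry `←ν_i` of the reversed path of `ν`: the number of north steps of
`ν` in column `m − i`. -/
def revNu (ν : List ℕ) (i : ℕ) : ℕ :=
  ((Finset.Ico 1 ν.length).filter (fun t => (ν.take t).sum + i = ν.sum)).card

namespace DNAux

lemma sum_take_le (l : List ℕ) (a : ℕ) : (l.take a).sum ≤ l.sum := by
  conv_rhs => rw [← List.take_append_drop a l]
  rw [List.sum_append]; exact Nat.le_add_right _ _

lemma take_sum_mono {l : List ℕ} {a b : ℕ} (h : a ≤ b) :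
    (l.take a).sum ≤ (l.take b).sum := by
  have h1 : l.take a = (l.take b).take a := by rw [List.take_take, Nat.min_eq_left h]
  rw [h1]; exact sum_take_le _ _

lemma sum_take_succ_eq {l : List ℕ} {k : ℕ} (h : k < l.length) :
    (l.take (k+1)).sum = (l.take k).sum + l.getD k 0 := by
  rw [List.getD_eq_getElem l 0 h, List.take_succ, List.sum_append,
    List.getElem?_eq_getElem h]
  simp

lemma sum_drop_eq {l : List ℕ} {k : ℕ} (h : k < l.length) :
    (l.drop k).sum = l.getD k 0 + (l.drop (k+1)).sum := by
  rw [List.getD_eq_getElem l 0 h]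
  conv_lhs => rw [List.drop_eq_getElem_cons h]
  rw [List.sum_cons]

lemma nuCheck_length (ν δ : List ℕ) : (nuCheck ν δ).length = δ.length + 1 := by
  simp [nuCheck]

lemma Ldn_subset_Lpts {ν δ : List ℕ} (hδ : IsIncrement ν δ) :
    Ldn ν δ ⊆ Lpts (nuCheck ν δ) := by
  intro p hp
  obtain ⟨h1, _, h3⟩ := hp
  exact ⟨by rw [nuCheck_length, hδ.1]; exact h1, h3⟩

lemma Lpts_mono {ω : List ℕ} {x y x' : ℕ} (h : (x, y) ∈ Lpts ω) (hx : x' ≤ x) :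
    (x', y) ∈ Lpts ω := ⟨h.1, hx.trans h.2⟩

lemma Ldn_finite (ν δ : List ℕ) : (Ldn ν δ).Finite := by
  apply Set.Finite.subset ((Set.finite_Iic ((nuCheck ν δ).sum)).prod (Set.finite_Iio ν.length))
  intro p hp
  obtain ⟨h1, _, h3⟩ := hp
  exact ⟨h3.trans (sum_take_le _ _), h1⟩

lemma incomp_comm {ω : List ℕ} {p q : ℕ × ℕ} (h : Incomp ω p q) : Incomp ω q p := by
  obtain ⟨h1, h2⟩ := h
  refine ⟨h1.symm, ?_⟩
  rwa [max_comm, min_comm]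

lemma incomp_irrefl (ω : List ℕ) (p : ℕ × ℕ) : ¬ Incomp ω p p := by
  rintro ⟨(⟨h, -⟩ | ⟨h, -⟩), -⟩ <;> exact lt_irrefl _ h

lemma no_NE {ω : List ℕ} {T : Set (ℕ × ℕ)} (hC : PairwiseCompat ω T)
    {a b : ℕ × ℕ} (ha : a ∈ T) (hb : b ∈ T) (h1 : a.1 < b.1) (h2 : a.2 < b.2)
    (hc : (b.1, a.2) ∈ Lpts ω) : False := by
  refine hC a ha b hb ⟨Or.inl ⟨h1, h2⟩, ?_⟩
  rwa [max_eq_right h1.le, min_eq_left h2.le]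

lemma unique_above {ν δ : List ℕ} (hδ : IsIncrement ν δ) {T : Set (ℕ × ℕ)}
    (hsub : T ⊆ Ldn ν δ) (hC : PairwiseCompat (nuCheck ν δ) T)
    {q' q p : ℕ × ℕ} (hq' : q' ∈ T) (hq : q ∈ T) (hp : p ∈ T)
    (h1 : q'.2 = q.2) (h2 : q'.1 < q.1) (h3 : p.1 = q.1) (h4 : q.2 < p.2) : False := by
  apply no_NE hC hq' hp (by omega) (by omega)
  have h5 : (q.1, q.2) ∈ Lpts (nuCheck ν δ) := by
    have := Ldn_subset_Lpts hδ (hsub hq); rwa [← Prod.mk.eta (p := q)]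
  rw [h3, h1]; exact h5

end DNAux
namespace DNAux

lemma Ldn_up_one {ν δ : List ℕ} (hδ : IsIncrement ν δ) {x y : ℕ}
    (h : (x, y) ∈ Ldn ν δ) (hy : y + 1 < ν.length) : (x, y + 1) ∈ Ldn ν δ := by
  obtain ⟨h1, h2, h3⟩ := h
  have hlen := hδ.1
  have hylen : y < δ.length := by omega
  have e1 : (ν.take (y+1+1)).sum = (ν.take (y+1)).sum + ν.getD (y+1) 0 :=
    sum_take_succ_eq hy
  have e2 : (δ.drop y).sum = δ.getD y 0 + (δ.drop (y+1)).sum := sum_drop_eq hylen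
  have e3 : δ.getD y 0 ≤ ν.getD (y+1) 0 := hδ.2 y hylen
  have h2' : ν.sum ≤ x + (ν.take (y+1)).sum + (δ.drop y).sum := h2
  have h3' : x ≤ ((nuCheck ν δ).take (y+1)).sum := h3
  refine ⟨hy, ?_, ?_⟩
  · show ν.sum ≤ x + (ν.take (y+1+1)).sum + (δ.drop (y+1)).sum
    omega
  · show x ≤ ((nuCheck ν δ).take (y+1+1)).sum
    exact h3'.trans (take_sum_mono (by omega))

lemma Ldn_vertical {ν δ : List ℕ} (hδ : IsIncrement ν δ) {x y j : ℕ}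
    (h : (x, y) ∈ Ldn ν δ) (hyj : y ≤ j) (hj : j < ν.length) : (x, j) ∈ Ldn ν δ := by
  induction j, hyj using Nat.le_induction with
  | base => exact h
  | succ j hyj ih => exact Ldn_up_one hδ (ih (by omega)) hj

lemma get_partner {ν δ : List ℕ} {T : Set (ℕ × ℕ)} (hT : IsDNTree ν δ T)
    {z : ℕ × ℕ} (hz : z ∈ Ldn ν δ) (hzT : z ∉ T) :
    ∃ t ∈ T, Incomp (nuCheck ν δ) z t := by
  by_contra hcon
  push_neg at hcon
  have hcompat : PairwiseCompat (nuCheck ν δ) (insert z T) := by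
    intro a ha b hb
    rcases Set.mem_insert_iff.mp ha with rfl | haT
    · rcases Set.mem_insert_iff.mp hb with rfl | hbT
      · exact incomp_irrefl _ _
      · exact hcon b hbT
    · rcases Set.mem_insert_iff.mp hb with rfl | hbT
      · exact fun hi => hcon a haT (incomp_comm hi)
      · exact hT.2.1 a haT b hbT
  have := hT.2.2 (insert z T) (Set.subset_insert _ _)
    (Set.insert_subset hz hT.1) hcompat
  exact hzT (this ▸ Set.mem_insert z T)

lemma exists_above {ν δ : List ℕ} (hδ : IsIncrement ν δ) {T : Set (ℕ × ℕ)}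
    (hT : IsDNTree ν δ T) {q : ℕ × ℕ} (hq : q ∈ T) (hi : q.2 + 1 < ν.length)
    (hleft : ∀ s ∈ T, s.2 = q.2 → q.1 ≤ s.1) :
    ∃ p ∈ T, p.1 = q.1 ∧ q.2 < p.2 := by
  by_contra hno
  push_neg at hno
  have hqL : (q.1, q.2) ∈ Ldn ν δ := by rw [Prod.mk.eta]; exact hT.1 hq
  -- generic treatment of a SW partner of (q.1, j), i < t.2 case gives element of B
  have hSW : ∀ t ∈ T, t.1 < q.1 → ((q.1, t.2) ∈ Lpts (nuCheck ν δ)) → q.2 < t.2 := by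
    intro t htT htx hcor
    rcases lt_trichotomy t.2 q.2 with hlt | heq | hgt
    · exact absurd (no_NE hT.2.1 htT hq htx hlt hcor) (by simp)
    · exact absurd (hleft t htT heq) (by omega)
    · exact hgt
  -- step 1: B nonempty
  have hBne : ∃ t ∈ T, t.1 < q.1 ∧ q.2 < t.2 := by
    have hzL : (q.1, ν.length - 1) ∈ Ldn ν δ := Ldn_vertical hδ hqL (by omega) (by omega)
    have hzT : (q.1, ν.length - 1) ∉ T := fun hmem =>
      absurd (hno _ hmem rfl) (by simp; omega)
    obtain ⟨t, htT, hinc⟩ := get_partner hT hzL hzT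
    obtain ⟨hor, hcor⟩ := hinc
    rcases hor with ⟨-, h2⟩ | ⟨h1, h2⟩
    · have := (hT.1 htT).1; dsimp only at h2; omega
    · dsimp only at h1 h2
      rw [max_eq_left h1.le, min_eq_right h2.le] at hcor
      exact ⟨t, htT, h1, hSW t htT h1 hcor⟩
  obtain ⟨t1, ht1T, ht1x, ht1y⟩ := hBne
  -- step 2: minimal height in B
  set Y : Set ℕ := {y | ∃ t ∈ T, t.1 < q.1 ∧ q.2 < t.2 ∧ t.2 = y} with hY
  have hYne : Y.Nonempty := ⟨t1.2, t1, ht1T, ht1x, ht1y, rfl⟩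
  obtain ⟨ts, htsT, htsx, htsy, htse⟩ := Nat.sInf_mem hYne
  have hzL : (q.1, sInf Y) ∈ Ldn ν δ := by
    rw [← htse]
    exact Ldn_vertical hδ hqL (by omega) (hT.1 htsT).1
  have hzT : (q.1, sInf Y) ∉ T := fun hmem =>
    absurd (hno _ hmem rfl) (by simp; omega)
  obtain ⟨t, htT, hinc⟩ := get_partner hT hzL hzT
  obtain ⟨hor, hcor⟩ := hinc
  rcases hor with ⟨h1, h2⟩ | ⟨h1, h2⟩
  · -- NE partner: contradict with ts
    dsimp only at h1 h2
    rw [max_eq_right h1.le, min_eq_left h2.le] at hcor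
    exact no_NE hT.2.1 htsT htT (by omega) (by omega) (by rw [htse]; exact hcor)
  · -- SW partner
    dsimp only at h1 h2
    rw [max_eq_left h1.le, min_eq_right h2.le] at hcor
    have := hSW t htT h1 hcor
    have : t.2 ∈ Y := ⟨t, htT, h1, this, rfl⟩
    exact absurd (Nat.sInf_le this) (by omega)

lemma step_strictMono {g : ℕ → ℕ} {ℓ : ℕ} (h : ∀ k, k < ℓ → g k < g (k+1)) :
    ∀ a b, a < b → b ≤ ℓ → g a < g b := by
  intro a b
  induction b with
  | zero => omega
  | succ b ih =>
    intro hab hbl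
    rcases Nat.lt_succ_iff_lt_or_eq.mp hab with h' | rfl
    · exact (ih h' (by omega)).trans (h b (by omega))
    · exact h a (by omega)

end DNAux
namespace DNAux

lemma chain_invariant {ω : List ℕ} {T : Set (ℕ × ℕ)} {q : ℕ → ℕ × ℕ}
    {c : ℕ → Set (ℕ × ℕ)} {ℓ : ℕ}
    (hcr : ConsecRow T q ℓ) (hc0 : c 0 = T)
    (hrot : ∀ k, k < ℓ → RotationAt ω (c k) (q k) (c (k+1))) :
    ∀ k, k ≤ ℓ →
      (∀ s ∈ T, (∀ j, j < k → s ≠ q j) → s ∈ c k) ∧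
      (∀ s ∈ c k, s.2 = (q 0).2 → s ∈ T ∧ ∀ j, j < k → s ≠ q j) := by
  intro k
  induction k with
  | zero =>
    intro _
    constructor
    · intro s hs _; rw [hc0]; exact hs
    · intro s hs _; rw [hc0] at hs; exact ⟨hs, fun j hj => by omega⟩
  | succ k ih =>
    intro hk
    obtain ⟨ihA, ihB⟩ := ih (by omega)
    obtain ⟨p, r, hp, hqk, hr, hpx, hpy, hry, hrx, hrect, heq⟩ := hrot k (by omega)
    constructor
    · intro s hs hsj
      rw [heq]
      exact Set.mem_insert_of_mem _
        ⟨ihA s hs (fun j hj => hsj j (by omega)), hsj k (by omega)⟩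
    · intro s hsc hsy
      rw [heq] at hsc
      rcases Set.mem_insert_iff.mp hsc with rfl | ⟨hsk, hne⟩
      · exfalso
        have hqy : (q k).2 = (q 0).2 := hcr.2.1 k (by omega)
        dsimp only at hsy
        omega
      · obtain ⟨hsT, hj⟩ := ihB s hsk hsy
        refine ⟨hsT, fun j hj' => ?_⟩
        rcases Nat.lt_succ_iff_lt_or_eq.mp hj' with h' | rfl
        · exact hj j h'
        · exact fun he => hne (he ▸ rfl)

lemma diff_set_eq {ω : List ℕ} {T : Set (ℕ × ℕ)} {q : ℕ → ℕ × ℕ}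
    {c : ℕ → Set (ℕ × ℕ)} {ℓ : ℕ} (hl : 1 ≤ ℓ)
    (hcr : ConsecRow T q ℓ) (hc0 : c 0 = T)
    (hrot : ∀ k, k < ℓ → RotationAt ω (c k) (q k) (c (k+1))) :
    {y | ∃ x, (x, y) ∈ T \ c ℓ} = {(q 0).2} := by
  obtain ⟨invA, invB⟩ := chain_invariant hcr hc0 hrot ℓ le_rfl
  ext y
  simp only [Set.mem_setOf_eq, Set.mem_singleton_iff]
  constructor
  · rintro ⟨x, hxT, hxn⟩
    by_contra hy
    apply hxn
    apply invA _ hxT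
    intro j hj he
    exact hy ((congrArg Prod.snd he).trans (hcr.2.1 j (by omega)))
  · rintro rfl
    refine ⟨(q 0).1, ?_, ?_⟩
    · rw [Prod.mk.eta]; exact hcr.1 0 (by omega)
    · rw [Prod.mk.eta]
      intro hmem
      exact (invB (q 0) hmem rfl).2 0 (by omega) rfl

lemma consec_rowN {T : Set (ℕ × ℕ)} (hfin : T.Finite)
    {q : ℕ → ℕ × ℕ} {ℓ : ℕ} (hcr : ConsecRow T q ℓ) :
    ℓ + 1 ≤ rowN T (q 0).2 := by
  have hmono : ∀ a b, a < b → b ≤ ℓ → (q a).1 < (q b).1 :=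
    step_strictMono (fun k hk => hcr.2.2.1 k hk)
  have hinj : Set.InjOn q (Set.Iic ℓ) := by
    intro a ha b hb hab
    by_contra hne
    rcases lt_trichotomy a b with h | h | h
    · exact absurd (congrArg Prod.fst hab) (by have := hmono a b h hb; omega)
    · exact hne h
    · exact absurd (congrArg Prod.fst hab) (by have := hmono b a h ha; omega)
  have himg : q '' (Set.Iic ℓ) ⊆ {p ∈ T | p.2 = (q 0).2} := by
    rintro s ⟨j, hj, rfl⟩
    exact ⟨hcr.1 j hj, hcr.2.1 j hj⟩
  have h1 : (q '' (Set.Iic ℓ)).ncard = ℓ + 1 := by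
    rw [Set.ncard_image_of_injOn hinj, ← Finset.coe_Iic, Set.ncard_coe_finset,
      Nat.card_Iic]
  calc ℓ + 1 = (q '' (Set.Iic ℓ)).ncard := h1.symm
    _ ≤ _ := Set.ncard_le_ncard himg (hfin.subset (Set.sep_subset _ _))

lemma chain_forced {ν δ : List ℕ} (hδ : IsIncrement ν δ) {T : Set (ℕ × ℕ)}
    (hT : IsDNTree ν δ T) {ℓ : ℕ} (hl : 1 ≤ ℓ)
    {q1 q2 : ℕ → ℕ × ℕ} {c1 c2 : ℕ → Set (ℕ × ℕ)}
    (hcr1 : ConsecRow T q1 ℓ) (hc10 : c1 0 = T)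
    (hrot1 : ∀ k, k < ℓ → RotationAt (nuCheck ν δ) (c1 k) (q1 k) (c1 (k+1)))
    (hcr2 : ConsecRow T q2 ℓ) (hc20 : c2 0 = T)
    (hrot2 : ∀ k, k < ℓ → RotationAt (nuCheck ν δ) (c2 k) (q2 k) (c2 (k+1)))
    (hy : (q1 0).2 = (q2 0).2) :
    c1 ℓ = c2 ℓ := by
  -- q1 0 = q2 0 : both leftmost in their common row
  have hq0 : q1 0 = q2 0 := by
    obtain ⟨p1, r1, hp1, -, -, hp1x, hp1y, -, -, -, -⟩ := hrot1 0 (by omega)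
    obtain ⟨p2, r2, hp2, -, -, hp2x, hp2y, -, -, -, -⟩ := hrot2 0 (by omega)
    rw [hc10] at hp1; rw [hc20] at hp2
    have h12 : (q1 0).1 ≤ (q2 0).1 := by
      by_contra hlt
      exact unique_above hδ hT.1 hT.2.1 (hcr2.1 0 (by omega)) (hcr1.1 0 (by omega))
        hp1 hy.symm (by omega) hp1x hp1y
    have h21 : (q2 0).1 ≤ (q1 0).1 := by
      by_contra hlt
      exact unique_above hδ hT.1 hT.2.1 (hcr1.1 0 (by omega)) (hcr2.1 0 (by omega))
        hp2 hy (by omega) hp2x hp2y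
    exact Prod.ext (by omega) hy
  -- all rotation centers agree
  have hq : ∀ k, k < ℓ → q1 k = q2 k := by
    intro k
    induction k with
    | zero => exact fun _ => hq0
    | succ k ihk =>
      intro hk
      have ih := ihk (by omega)
      have hxeq : (q1 (k+1)).1 = (q2 (k+1)).1 := by
        by_contra hne
        have hy1 : (q1 (k+1)).2 = (q2 0).2 := (hcr1.2.1 (k+1) (by omega)).trans hy
        have hy2 : (q2 (k+1)).2 = (q1 0).2 := (hcr2.2.1 (k+1) (by omega)).trans hy.symm
        rcases lt_or_gt_of_ne hne with h | h
        · exact hcr2.2.2.2 k (by omega) (q1 (k+1)) (hcr1.1 (k+1) (by omega)) hy1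
            (by rw [← ih]; exact hcr1.2.2.1 k (by omega)) h
        · exact hcr1.2.2.2 k (by omega) (q2 (k+1)) (hcr2.1 (k+1) (by omega)) hy2
            (by rw [ih]; exact hcr2.2.2.1 k (by omega)) h
      exact Prod.ext hxeq ((hcr1.2.1 (k+1) (by omega)).trans
        (hy.trans (hcr2.2.1 (k+1) (by omega)).symm))
  -- chains agree
  have hc : ∀ k, k ≤ ℓ → c1 k = c2 k := by
    intro k
    induction k with
    | zero => intro _; rw [hc10, hc20]
    | succ k ihk =>
      intro hk
      have ihc := ihk (by omega)
      obtain ⟨p1, r1, hp1, hqk1, hr1, hp1x, hp1y, hr1y, hr1x, hrect1, heq1⟩ :=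
        hrot1 k (by omega)
      obtain ⟨p2, r2, hp2, hqk2, hr2, hp2x, hp2y, hr2y, hr2x, hrect2, heq2⟩ :=
        hrot2 k (by omega)
      have hqe : q1 k = q2 k := hq k (by omega)
      rw [← hqe] at hp2x hp2y hr2y hr2x hrect2
      rw [← ihc] at hp2 hr2 hrect2
      -- force r
      have hrx : r1.1 = r2.1 := by
        by_contra hne
        rcases lt_or_gt_of_ne hne with h | h
        · rcases hrect2 r1 hr1 (by omega) (by omega) (by omega) (by omega) with
            he | he | he
          · rw [he] at hr1x; omega
          · rw [he] at hr1x; omega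
          · rw [he] at h; omega
        · rcases hrect1 r2 hr2 (by omega) (by omega) (by omega) (by omega) with
            he | he | he
          · rw [he] at hr2x; omega
          · rw [he] at hr2x; omega
          · rw [he] at h; omega
      have hre : r1 = r2 := Prod.ext hrx (hr1y.trans hr2y.symm)
      -- force p
      have hpy' : p1.2 = p2.2 := by
        by_contra hne
        rcases lt_or_gt_of_ne hne with h | h
        · rcases hrect2 p1 hp1 (by omega) (by omega) (by omega) (by omega) with
            he | he | he
          · rw [he] at h; omega
          · rw [he] at hp1y; omega
          · rw [he] at hp1y; omega
        · rcases hrect1 p2 hp2 (by omega) (by omega) (by omega) (by omega) with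
            he | he | he
          · rw [he] at h; omega
          · rw [he] at hp2y; omega
          · rw [he] at hp2y; omega
      rw [heq1, heq2, ihc, hqe, hrx, hpy']
  exact hc ℓ le_rfl
end DNAux
namespace DNAux

lemma exists_left_itv {ν δ : List ℕ} (hδ : IsIncrement ν δ)
    {T : Set (ℕ × ℕ)} (hT : IsDNTree ν δ T) {ℓ i : ℕ} (hl : 1 ≤ ℓ)
    (hi : i + 1 < ν.length) (hcard : ℓ + 1 ≤ rowN T i) :
    ∃ (q : ℕ → ℕ × ℕ) (c : ℕ → Set (ℕ × ℕ)),
      ConsecRow T q ℓ ∧ (q 0).2 = i ∧ c 0 = T ∧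
      ∀ k, k < ℓ → RotationAt (nuCheck ν δ) (c k) (q k) (c (k+1)) := by
  classical
  have hTfin : T.Finite := (Ldn_finite ν δ).subset hT.1
  have hRfin : {p ∈ T | p.2 = i}.Finite := hTfin.subset (Set.sep_subset _ _)
  set X : Finset ℕ := hRfin.toFinset.image Prod.fst with hXdef
  have hmemX : ∀ s : ℕ × ℕ, s ∈ T → s.2 = i → s.1 ∈ X := by
    intro s hs hsy
    rw [hXdef]
    exact Finset.mem_image.mpr ⟨s, (Set.Finite.mem_toFinset _).mpr ⟨hs, hsy⟩, rfl⟩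
  have hXT : ∀ x ∈ X, ((x, i) : ℕ × ℕ) ∈ T := by
    intro x hx
    obtain ⟨p, hp, he⟩ := Finset.mem_image.mp hx
    obtain ⟨hpT, hpy⟩ := (Set.Finite.mem_toFinset _).mp hp
    have : p = (x, i) := Prod.ext he hpy
    rwa [← this]
  have hXcard : ℓ + 1 ≤ X.card := by
    have hinj : Set.InjOn Prod.fst (hRfin.toFinset : Set (ℕ × ℕ)) := by
      intro a ha b hb hab
      simp only [Finset.mem_coe, Set.Finite.mem_toFinset, Set.mem_setOf_eq] at ha hb
      exact Prod.ext hab (ha.2.trans hb.2.symm)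
    have h1 : X.card = hRfin.toFinset.card := Finset.card_image_of_injOn hinj
    have h2 : rowN T i = hRfin.toFinset.card := Set.ncard_eq_toFinset_card _ hRfin
    omega
  set e := X.orderEmbOfFin rfl with hedef
  set g : ℕ → ℕ := fun k => if h : k < X.card then e ⟨k, h⟩ else 0 with hgdef
  have hgval : ∀ k (h : k < X.card), g k = e ⟨k, h⟩ := by
    intro k h; rw [hgdef]; simp only [dif_pos h]
  have hgX : ∀ k, k ≤ ℓ → g k ∈ X := by
    intro k hk
    rw [hgval k (by omega)]
    exact Finset.orderEmbOfFin_mem X rfl _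
  have hglt : ∀ k, k < ℓ → g k < g (k+1) := by
    intro k hk
    rw [hgval k (by omega), hgval (k+1) (by omega)]
    exact e.strictMono (by simp [Fin.mk_lt_mk])
  have hrange : ∀ x ∈ X, ∃ j : Fin X.card, e j = x := by
    intro x hx
    have : x ∈ Set.range e := by
      rw [hedef, Finset.range_orderEmbOfFin]; exact_mod_cast hx
    exact this
  have hnob : ∀ k, k < ℓ → ∀ x ∈ X, g k < x → x < g (k+1) → False := by
    intro k hk x hx h1 h2
    obtain ⟨j, rfl⟩ := hrange x hx
    rw [hgval k (by omega)] at h1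
    rw [hgval (k+1) (by omega)] at h2
    have hj1 : k < j.1 := by
      have := e.strictMono.lt_iff_lt.mp h1
      simpa [Fin.lt_def] using this
    have hj2 : j.1 < k + 1 := by
      have := e.strictMono.lt_iff_lt.mp h2
      simpa [Fin.lt_def] using this
    omega
  have hgleft : ∀ x ∈ X, g 0 ≤ x := by
    intro x hx
    obtain ⟨j, rfl⟩ := hrange x hx
    rw [hgval 0 (by omega)]
    exact e.monotone (by simp [Fin.le_def])
  have hgmono : ∀ a b, a < b → b ≤ ℓ → g a < g b := step_strictMono hglt
  -- the consecutive row nodes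
  set Q : ℕ → ℕ × ℕ := fun k => ((g k, i) : ℕ × ℕ) with hQdef
  have hQ1 : ∀ k, (Q k).1 = g k := fun _ => rfl
  have hQ2 : ∀ k, (Q k).2 = i := fun _ => rfl
  have hQT : ∀ k, k ≤ ℓ → Q k ∈ T := fun k hk => hXT _ (hgX k hk)
  have hcr : ConsecRow T Q ℓ := by
    refine ⟨hQT, fun k hk => rfl, fun k hk => hglt k hk, ?_⟩
    intro k hk s hs hsy h1 h2
    exact hnob k hk s.1 (hmemX s hs hsy) h1 h2
  -- the node above the leftmost
  obtain ⟨p₀, hp₀T, hp₀x, hp₀y⟩ :=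
    exists_above hδ hT (hQT 0 (by omega)) hi
      (fun s hs hsy => hgleft s.1 (hmemX s hs hsy))
  set A : Set ℕ := {y | ((g 0, y) : ℕ × ℕ) ∈ T ∧ i < y} with hAdef
  have hAne : A.Nonempty := by
    refine ⟨p₀.2, ?_, hp₀y⟩
    have : (g 0, p₀.2) = p₀ := Prod.ext hp₀x.symm rfl
    rw [this]; exact hp₀T
  obtain ⟨hbT, hib⟩ : ((g 0, sInf A) : ℕ × ℕ) ∈ T ∧ i < sInf A := Nat.sInf_mem hAne
  have hbmin : ∀ y, ((g 0, y) : ℕ × ℕ) ∈ T → i < y → sInf A ≤ y :=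
    fun y a b => Nat.sInf_le ⟨a, b⟩
  set b := sInf A with hbdef
  -- the chain
  set C : ℕ → Set (ℕ × ℕ) := fun k =>
    (T \ (Q '' {j | j < k})) ∪ ((fun j => ((g j, b) : ℕ × ℕ)) '' {j | 1 ≤ j ∧ j ≤ k})
    with hCdef
  have hC0 : C 0 = T := by
    rw [hCdef]
    ext s
    simp only [Set.mem_union, Set.mem_diff, Set.mem_image, Set.mem_setOf_eq]
    constructor
    · rintro (⟨hs, -⟩ | ⟨j, ⟨hj1, hj2⟩, -⟩)
      · exact hs
      · omega
    · intro hs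
      exact Or.inl ⟨hs, by rintro ⟨j, hj, -⟩; omega⟩
  have hQnotin : ∀ k k', k ≤ ℓ → Q k ∉ Q '' {j | j < min k' k} := by
    rintro k k' hk ⟨j, hj, he⟩
    have hje : g j = g k := congrArg Prod.fst he
    have : j < k := lt_of_lt_of_le hj (min_le_right _ _)
    have := hgmono j k this hk
    omega
  have hrot : ∀ k, k < ℓ → RotationAt (nuCheck ν δ) (C k) (Q k) (C (k+1)) := by
    intro k hk
    have hkl : k ≤ ℓ := le_of_lt hk
    have hQkC : Q k ∈ C k := by
      rw [hCdef]
      refine Or.inl ⟨hQT k hkl, ?_⟩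
      have := hQnotin k k hkl
      rwa [min_self] at this
    have hrC : Q (k+1) ∈ C k := by
      rw [hCdef]
      refine Or.inl ⟨hQT (k+1) hk, ?_⟩
      have := hQnotin (k+1) k hk
      rwa [min_eq_left (by omega)] at this
    have hpC : ((g k, b) : ℕ × ℕ) ∈ C k := by
      rw [hCdef]
      rcases Nat.eq_zero_or_pos k with rfl | hkpos
      · exact Or.inl ⟨hbT, by rintro ⟨j, hj, -⟩; simp at hj⟩
      · exact Or.inr ⟨k, ⟨hkpos, le_rfl⟩, rfl⟩
    refine ⟨(g k, b), Q (k+1), hpC, hQkC, hrC, rfl, hib, rfl, hglt k hk, ?_, ?_⟩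
    · -- rectangle condition
      intro s hs h1 h2 h3 h4
      have h1' : g k ≤ s.1 := h1
      have h2' : s.1 ≤ g (k+1) := h2
      have h3' : i ≤ s.2 := h3
      have h4' : s.2 ≤ b := h4
      rw [hCdef] at hs
      rcases hs with ⟨hsT, hsim⟩ | ⟨j, ⟨hj1, hj2⟩, rfl⟩
      · by_cases hsy : s.2 = i
        · have hnol : ¬(g k < s.1 ∧ s.1 < g (k+1)) :=
            fun ⟨a, c⟩ => hnob k hk s.1 (hmemX s hsT hsy) a c
          have : s.1 = g k ∨ s.1 = g (k+1) := by omega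
          rcases this with he | he
          · exact Or.inr (Or.inl (Prod.ext he hsy))
          · exact Or.inr (Or.inr (Prod.ext he hsy))
        · have hsy' : i < s.2 := by omega
          by_cases hsx : s.1 = g k
          · rcases Nat.eq_zero_or_pos k with rfl | hkpos
            · -- s is in the column of q 0 : height forced to be b
              have hsv : s = (g 0, s.2) := Prod.ext hsx rfl
              have : b ≤ s.2 := hbmin s.2 (hsv ▸ hsT) hsy'
              exact Or.inl (Prod.ext hsx (by omega))
            · exact absurd (unique_above hδ hT.1 hT.2.1 (hQT 0 (by omega))
                (hQT k hkl) hsT rfl (hgmono 0 k hkpos hkl) hsx hsy') (by simp)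
          · -- s strictly northeast of q k : incompatible
            exfalso
            have hcor : ((s.1, i) : ℕ × ℕ) ∈ Lpts (nuCheck ν δ) := by
              refine Lpts_mono ?_ h2'
              exact Ldn_subset_Lpts hδ (hT.1 (hQT (k+1) hk))
            refine no_NE hT.2.1 (hQT k hkl) hsT ?_ ?_ ?_
            · have := hQ1 k; omega
            · have := hQ2 k; omega
            · have h5 := hQ2 k
              rw [h5]; exact hcor
      · -- s is an inserted node
        have h1'' : g k ≤ g j := h1
        have hjk : j = k := by
          by_contra hne
          have := hgmono j k (by omega) hkl
          omega
        subst hjk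
        exact Or.inl rfl
    · -- the next chain element
      rw [hCdef]
      ext s
      simp only [Set.mem_union, Set.mem_diff, Set.mem_image, Set.mem_setOf_eq,
        Set.mem_insert_iff, Set.mem_singleton_iff]
      constructor
      · rintro (⟨hsT, hsim⟩ | ⟨j, ⟨hj1, hj2⟩, rfl⟩)
        · refine Or.inr ⟨Or.inl ⟨hsT, fun ⟨j, hj, he⟩ => hsim ⟨j, by omega, he⟩⟩, ?_⟩
          intro he
          exact hsim ⟨k, by omega, he.symm⟩
        · rcases Nat.lt_succ_iff_lt_or_eq.mp (Nat.lt_succ_of_le hj2) with hj' | rfl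
          · refine Or.inr ⟨Or.inr ⟨j, ⟨hj1, by omega⟩, rfl⟩, fun he => ?_⟩
            have h5 : ((g j, b) : ℕ × ℕ).2 = b := rfl
            have h6 := congrArg Prod.snd he
            have h7 := hQ2 k
            omega
          · exact Or.inl rfl
      · rintro (he | ⟨hCk, hne⟩)
        · exact Or.inr ⟨k+1, ⟨by omega, le_rfl⟩, he.symm⟩
        · rcases hCk with ⟨hsT, hsim⟩ | ⟨j, ⟨hj1, hj2⟩, he⟩
          · refine Or.inl ⟨hsT, ?_⟩
            rintro ⟨j, hj, he⟩
            rcases Nat.lt_succ_iff_lt_or_eq.mp hj with hj' | rfl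
            · exact hsim ⟨j, hj', he⟩
            · exact hne he.symm
          · exact Or.inr ⟨j, ⟨hj1, by omega⟩, he⟩
  exact ⟨Q, C, hcr, rfl, hC0, hrot⟩

end DNAux
/-- Let `T` be a (δ,ν)-tree with row vector
`r(T) = (r_0, …, r_n)`.  The number of left intervals of length `ℓ ≥ 1` with
bottom element `T` in the rotation poset of (δ,ν)-trees equals
`|{0 ≤ i ≤ n−1 : r_i ≥ ℓ}|`. -/
theorem dn_left_interval_count (ν δ : List ℕ) (hν : ν ≠ []) (hδ : IsIncrement ν δ)
    (T : Set (ℕ × ℕ)) (hT : IsDNTree ν δ T)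
    (r : List ℕ) (hr : r.length = ν.length)
    (hrow : ∀ i, i < ν.length → rowN T i = r.getD i 0 + 1)
    (ℓ : ℕ) (hℓ : 1 ≤ ℓ) :
    {T' : Set (ℕ × ℕ) | IsLeftDNItv ν δ T T' ℓ}.ncard =
      ((Finset.range (ν.length - 1)).filter (fun i => ℓ ≤ r.getD i 0)).card := by
  classical
  have hlen : 0 < ν.length := List.length_pos_iff.mpr hν
  set S := {T' : Set (ℕ × ℕ) | IsLeftDNItv ν δ T T' ℓ} with hS
  set f : Set (ℕ × ℕ) → ℕ := fun T' => sInf {y | ∃ x, (x, y) ∈ T \ T'} with hf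
  have hval : ∀ T' (qq : ℕ → ℕ × ℕ) (cc : ℕ → Set (ℕ × ℕ)),
      ConsecRow T qq ℓ → cc 0 = T → cc ℓ = T' →
      (∀ k, k < ℓ → RotationAt (nuCheck ν δ) (cc k) (qq k) (cc (k+1))) →
      f T' = (qq 0).2 := by
    intro T' qq cc hcr hc0 hcl hrot
    show sInf {y | ∃ x, (x, y) ∈ T \ T'} = (qq 0).2
    rw [← hcl, DNAux.diff_set_eq hℓ hcr hc0 hrot]
    exact csInf_singleton _
  have himg : f '' S =
      ↑((Finset.range (ν.length - 1)).filter (fun i => ℓ ≤ r.getD i 0)) := by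
    ext i
    simp only [Set.mem_image, Finset.coe_filter, Finset.mem_range, Set.mem_setOf_eq]
    constructor
    · rintro ⟨T', hT', rfl⟩
      obtain ⟨-, -, qq, hcr, cc, hc0, hcl, hrot⟩ := hT'
      have hfv : f T' = (qq 0).2 := hval T' qq cc hcr hc0 hcl hrot
      rw [hfv]
      obtain ⟨p, rr, hp, -, -, -, hpy, -, -, -, -⟩ := hrot 0 (by omega)
      rw [hc0] at hp
      have hplen : p.2 < ν.length := (hT.1 hp).1
      have hrn : ℓ + 1 ≤ rowN T (qq 0).2 :=
        DNAux.consec_rowN ((DNAux.Ldn_finite ν δ).subset hT.1) hcr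
      have hrq := hrow (qq 0).2 (by omega)
      exact ⟨by omega, by omega⟩
    · rintro ⟨hi, hri⟩
      obtain ⟨qq, cc, hcr, hq0, hc0, hrot⟩ :=
        DNAux.exists_left_itv (i := i) hδ hT hℓ (by omega)
          (by rw [hrow i (by omega)]; omega)
      refine ⟨cc ℓ, ⟨hT, hℓ, qq, hcr, cc, hc0, rfl, hrot⟩, ?_⟩
      rw [hval (cc ℓ) qq cc hcr hc0 rfl hrot, hq0]
  have hinj : Set.InjOn f S := by
    intro T1 h1 T2 h2 hfe
    obtain ⟨-, -, q1, hcr1, c1, hc10, hc1l, hrot1⟩ := h1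
    obtain ⟨-, -, q2, hcr2, c2, hc20, hc2l, hrot2⟩ := h2
    have hv1 := hval T1 q1 c1 hcr1 hc10 hc1l hrot1
    have hv2 := hval T2 q2 c2 hcr2 hc20 hc2l hrot2
    have hyy : (q1 0).2 = (q2 0).2 := by rw [← hv1, ← hv2, hfe]
    rw [← hc1l, ← hc2l]
    exact DNAux.chain_forced hδ hT hℓ hcr1 hc10 hrot1 hcr2 hc20 hrot2 hyy
  calc S.ncard = (f '' S).ncard := (Set.ncard_image_of_injOn hinj).symm
    _ = _ := by rw [himg, Set.ncard_coe_finset]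
end

section
/- Let ν be a lattice path, δ an increment vector for ν, T a (δ,ν)-tree with reduced column vector c̄_δ(T) = (c̄_0, …, c̄_{m−1}), and ℓ ≥ 1. The number of right intervals of length ℓ in the rotation poset of (δ,ν)-trees with top element T is equal to |{0 ≤ i ≤ m−1 : c̄_i ≥ ℓ}|. -/
/-! ### Auxiliary definitions and lemmas for the proof -/

private def Af (ν δ : List ℕ) (y : ℕ) : ℕ := ((nuCheck ν δ).take (y+1)).sum
private def Sf (ν δ : List ℕ) (y : ℕ) : ℕ := (ν.take (y+1)).sum + (δ.drop y).sum

private lemma take_sum_mono {l : List ℕ} {a b : ℕ} (h : a ≤ b) :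
    (l.take a).sum ≤ (l.take b).sum := by
  have : l.take b = l.take (a + (b - a)) := by congr 1; omega
  rw [this, List.take_add, List.sum_append]; omega

private lemma take_sum_le (l : List ℕ) (a : ℕ) : (l.take a).sum ≤ l.sum := by
  rcases le_or_gt a l.length with h | h
  · calc (l.take a).sum ≤ (l.take l.length).sum := take_sum_mono h
      _ = l.sum := by rw [List.take_length]
  · rw [List.take_of_length_le h.le]

private lemma sum_le_sum_of_getD : ∀ (l₁ l₂ : List ℕ), l₁.length ≤ l₂.length →
    (∀ i, i < l₁.length → l₁.getD i 0 ≤ l₂.getD i 0) → l₁.sum ≤ l₂.sum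
  | [], _, _, _ => Nat.zero_le _
  | (a :: l₁), [], h, _ => by simp at h
  | (a :: l₁), (b :: l₂), h, hg => by
      simp only [List.sum_cons]
      have h0 := hg 0 (by simp)
      simp only [List.getD_cons_zero] at h0
      have := sum_le_sum_of_getD l₁ l₂ (by simpa using h) (fun i hi => by
        have := hg (i+1) (by simpa using hi)
        simpa using this)
      omega

section Basic
variable {ν δ : List ℕ}

private lemma delta_sum_le (hδ : IsIncrement ν δ) : δ.sum ≤ ν.sum := by
  rcases ν with _ | ⟨n0, ν'⟩
  · have := hδ.1; simp at this
  · have h1 : δ.length ≤ ν'.length := by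
      have := hδ.1; simp at this; omega
    have : δ.sum ≤ ν'.sum := by
      apply sum_le_sum_of_getD _ _ h1
      intro i hi
      have := hδ.2 i hi
      simpa using this
    simp only [List.sum_cons]; omega

private lemma omega_length (hδ : IsIncrement ν δ) : (nuCheck ν δ).length = ν.length := by
  simp [nuCheck]; have := hδ.1; omega

private lemma omega_sum (hδ : IsIncrement ν δ) : (nuCheck ν δ).sum = ν.sum := by
  simp [nuCheck]
  have := delta_sum_le hδ; omega

private lemma Af_mono (hδ : IsIncrement ν δ) {y y' : ℕ} (h : y ≤ y') : Af ν δ y ≤ Af ν δ y' :=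
  take_sum_mono (by omega)

private lemma Af_le_m (hδ : IsIncrement ν δ) (y : ℕ) : Af ν δ y ≤ ν.sum := by
  rw [← omega_sum hδ]; exact take_sum_le _ _

private lemma Sf_succ (hδ : IsIncrement ν δ) (y : ℕ) : Sf ν δ y ≤ Sf ν δ (y+1) := by
  rcases lt_or_ge y δ.length with h | h
  · have hy1 : y + 1 < ν.length := by have := hδ.1; omega
    have hd : (δ.drop y).sum = δ.getD y 0 + (δ.drop (y+1)).sum := by
      rw [List.drop_eq_getElem_cons h, List.sum_cons, List.getD_eq_getElem δ 0 h]
    have hn : (ν.take (y+2)).sum = (ν.take (y+1)).sum + ν.getD (y+1) 0 := by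
      rw [List.take_succ, List.sum_append]
      simp [List.getD, List.getElem?_eq_getElem hy1]
    have := hδ.2 y h
    simp only [Sf]; rw [hd, hn]; omega
  · have hd : (δ.drop y) = [] := List.drop_of_length_le h
    have hd' : (δ.drop (y+1)) = [] := List.drop_of_length_le (by omega)
    simp only [Sf, hd, hd']
    have := take_sum_mono (l := ν) (a := y+1) (b := y+1+1) (by omega)
    omega

private lemma Sf_mono (hδ : IsIncrement ν δ) {y y' : ℕ} (h : y ≤ y') : Sf ν δ y ≤ Sf ν δ y' := by
  induction y' with
  | zero => simp_all
  | succ n ih =>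
    rcases Nat.lt_or_ge y (n+1) with h' | h'
    · exact le_trans (ih (by omega)) (Sf_succ hδ n)
    · have : y = n + 1 := by omega
      simp [this]

private lemma m_le_Af_add_Sf (hδ : IsIncrement ν δ) (y : ℕ) : ν.sum ≤ Af ν δ y + Sf ν δ y := by
  have h1 : Af ν δ y = (ν.sum - δ.sum) + (δ.take y).sum := by
    simp [Af, nuCheck]
  have h2 : (δ.take y).sum + (δ.drop y).sum = δ.sum := by
    rw [← List.sum_append, List.take_append_drop]
  have := delta_sum_le hδ
  simp only [Sf]; omega

private lemma mem_Ldn {p : ℕ × ℕ} :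
    p ∈ Ldn ν δ ↔ p.2 < ν.length ∧ ν.sum ≤ p.1 + Sf ν δ p.2 ∧ p.1 ≤ Af ν δ p.2 := by
  simp only [Ldn, Set.mem_setOf_eq, Af, Sf]; omega

private lemma mem_Lpts (hδ : IsIncrement ν δ) {p : ℕ × ℕ} :
    p ∈ Lpts (nuCheck ν δ) ↔ p.2 < ν.length ∧ p.1 ≤ Af ν δ p.2 := by
  simp only [Lpts, Set.mem_setOf_eq, Af, omega_length hδ]

/-- southwest-northeast incompatibility creator -/
private lemma incomp_sw (hδ : IsIncrement ν δ) {p q : ℕ × ℕ}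
    (h1 : p.1 < q.1) (h2 : p.2 < q.2) (h3 : p.2 < ν.length) (h4 : q.1 ≤ Af ν δ p.2) :
    Incomp (nuCheck ν δ) p q := by
  refine ⟨Or.inl ⟨h1, h2⟩, ?_⟩
  rw [mem_Lpts hδ]
  constructor
  · simpa [min_eq_left h2.le] using h3
  · simpa [min_eq_left h2.le, max_eq_right h1.le] using h4

private lemma incomp_comm {ω : List ℕ} {p q : ℕ × ℕ} (h : Incomp ω p q) : Incomp ω q p := by
  obtain ⟨h1, h2⟩ := h
  exact ⟨h1.symm.imp (fun h => h) (fun h => h), by rwa [max_comm, min_comm]⟩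

private lemma not_incomp_col {ω : List ℕ} {p q : ℕ × ℕ} (h : p.1 = q.1) : ¬ Incomp ω p q := by
  rintro ⟨h1 | h1, -⟩ <;> omega

private lemma not_incomp_row {ω : List ℕ} {p q : ℕ × ℕ} (h : p.2 = q.2) : ¬ Incomp ω p q := by
  rintro ⟨h1 | h1, -⟩ <;> omega

/-- From tree maximality: every outside point of `L` conflicts with a tree node. -/
private lemma tree_conflict {T : Set (ℕ × ℕ)} (hT : IsDNTree ν δ T) {z : ℕ × ℕ}
    (hz : z ∈ Ldn ν δ) (hzT : z ∉ T) : ∃ t ∈ T, Incomp (nuCheck ν δ) t z := by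
  by_contra h
  push_neg at h
  have hcomp : PairwiseCompat (nuCheck ν δ) (insert z T) := by
    intro p hp q hq
    rcases Set.mem_insert_iff.1 hp with hp1 | hp1 <;>
      rcases Set.mem_insert_iff.1 hq with hq1 | hq1
    · rw [hp1, hq1]; exact not_incomp_col rfl
    · rw [hp1]; exact fun hi => h q hq1 (incomp_comm hi)
    · rw [hq1]; exact h p hp1
    · exact hT.2.1 p hp1 q hq1
  have := hT.2.2 (insert z T) (Set.subset_insert _ _)
    (Set.insert_subset hz hT.1) hcomp
  exact hzT (this ▸ Set.mem_insert z T)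

private lemma relevant_iff (hδ : IsIncrement ν δ) {p : ℕ × ℕ} :
    Relevant ν δ p ↔ p ∈ Ldn ν δ ∧ 1 ≤ p.1 ∧ ν.sum + 1 ≤ p.1 + Sf ν δ p.2 := by
  constructor
  · rintro ⟨hp, q, hq, hq2, hq1⟩
    rw [mem_Ldn] at hq
    refine ⟨hp, by omega, ?_⟩
    rw [hq2] at hq; omega
  · rintro ⟨hp, h1, h2⟩
    refine ⟨hp, (p.1 - 1, p.2), ?_, rfl, by omega⟩
    rw [mem_Ldn] at hp ⊢
    dsimp only
    exact ⟨hp.1, by omega, by omega⟩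

private lemma Ldn_finite : (Ldn ν δ).Finite := by
  apply Set.Finite.subset (Set.finite_Icc (0,0) (ν.sum + δ.sum, ν.length))
  rintro ⟨a, b⟩ h
  rw [mem_Ldn] at h
  dsimp only at h
  have h2 : Af ν δ b ≤ (nuCheck ν δ).sum := take_sum_le _ _
  simp only [nuCheck, List.sum_cons] at h2
  simp only [Set.mem_Icc, Prod.le_def]
  omega

end Basic
/-- The canonical data of a right interval with top `T`: column `x'` contains the
tree nodes `(x', Y 0), …, (x', Y ℓ)` consecutively at the top of the column, and
`(x, Y ℓ)` is the closest tree node left of `(x', Y ℓ)` in its row. -/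
private structure GoodData (ν δ : List ℕ) (T : Set (ℕ × ℕ)) (ℓ x' x : ℕ) (Y : ℕ → ℕ) : Prop where
  memS : ∀ k, k ≤ ℓ → (x', Y k) ∈ T
  mono : ∀ k, k < ℓ → Y k < Y (k+1)
  hxx : x < x'
  memQ : (x, Y ℓ) ∈ T
  top : ∀ b, Y ℓ < b → (x', b) ∉ T
  betw : ∀ k, k < ℓ → ∀ b, Y k < b → b < Y (k+1) → (x', b) ∉ T
  row : ∀ a, x < a → a < x' → (a, Y ℓ) ∉ T
  rel0 : ν.sum + 1 ≤ x' + Sf ν δ (Y 0)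

section GoodLemmas
variable {ν δ : List ℕ} {T : Set (ℕ × ℕ)} {ℓ x' x : ℕ} {Y : ℕ → ℕ}
variable {k k' : ℕ}

private lemma Y_lt (G : GoodData ν δ T ℓ x' x Y) (hk : k < k') (hk' : k' ≤ ℓ) : Y k < Y k' := by
  induction k' with
  | zero => omega
  | succ n ih =>
    rcases Nat.lt_or_ge k n with h | h
    · exact lt_trans (ih h (by omega)) (G.mono n (by omega))
    · have : k = n := by omega
      subst this; exact G.mono k (by omega)

private lemma Y_le (G : GoodData ν δ T ℓ x' x Y) (hk : k ≤ k') (hk' : k' ≤ ℓ) : Y k ≤ Y k' := by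
  rcases eq_or_lt_of_le hk with rfl | h
  · exact le_rfl
  · exact (Y_lt G h hk').le

private lemma Y_len (hT : IsDNTree ν δ T) (G : GoodData ν δ T ℓ x' x Y) (hk : k ≤ ℓ) : Y k < ν.length := by
  have := hT.1 (G.memS k hk)
  rw [mem_Ldn] at this
  exact this.1

private lemma x'_le_Af (hT : IsDNTree ν δ T) (G : GoodData ν δ T ℓ x' x Y) (hk : k ≤ ℓ) : x' ≤ Af ν δ (Y k) := by
  have := hT.1 (G.memS k hk)
  rw [mem_Ldn] at this
  exact this.2.2

private lemma relk (hδ : IsIncrement ν δ) (G : GoodData ν δ T ℓ x' x Y) (hk : k ≤ ℓ) : ν.sum + 1 ≤ x' + Sf ν δ (Y k) :=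
  le_trans G.rel0 (by have := Sf_mono hδ (Y_le G (Nat.zero_le k) hk); omega)

/-- Any node of `T` in the rectangle `[x, x') × [Y 0, Y ℓ)` is impossible, and in
`[x, x') × [Y 0, Y ℓ]` only `(x, Y ℓ)` survives. -/
private lemma big_claim (hδ : IsIncrement ν δ) (hT : IsDNTree ν δ T)
    (G : GoodData ν δ T ℓ x' x Y) {a b : ℕ} (ha1 : x ≤ a) (ha2 : a < x') (hb1 : Y 0 ≤ b)
    (hb2 : b ≤ Y ℓ) (hmem : (a, b) ∈ T) : a = x ∧ b = Y ℓ := by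
  have hblen : b < ν.length := by
    have := hT.1 hmem; rw [mem_Ldn] at this; exact this.1
  rcases eq_or_lt_of_le hb2 with rfl | hblt
  · refine ⟨?_, rfl⟩
    by_contra hne
    exact G.row a (by omega) ha2 hmem
  · exfalso
    have hA : x' ≤ Af ν δ b := le_trans (x'_le_Af hT G (Nat.zero_le ℓ)) (Af_mono hδ hb1)
    exact hT.2.1 _ hmem _ (G.memS ℓ le_rfl)
      (incomp_sw hδ (p := (a,b)) (q := (x', Y ℓ)) ha2 hblt hblen hA)

/-- Rows of `T`-nodes in column `x'` weakly above `Y 0` are among the `Y k`. -/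
private lemma colx'_rows (G : GoodData ν δ T ℓ x' x Y) {b : ℕ} (hmem : (x', b) ∈ T) (hb : Y 0 ≤ b) :
    ∃ k, k ≤ ℓ ∧ b = Y k := by
  have hble : b ≤ Y ℓ := by
    by_contra h; exact G.top b (by omega) hmem
  have step : ∀ n k, k ≤ ℓ → ℓ - k = n → Y k ≤ b → ∃ i, i ≤ ℓ ∧ b = Y i := by
    intro n
    induction n with
    | zero =>
      intro k hk h0 hb'
      have hkl : k = ℓ := by omega
      subst hkl
      exact ⟨k, le_rfl, by omega⟩
    | succ n ih =>
      intro k hk h0 hb'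
      rcases eq_or_lt_of_le hb' with he | hlt
      · exact ⟨k, hk, he.symm⟩
      · have hkℓ : k < ℓ := by omega
        have h2 : Y (k+1) ≤ b := by
          by_contra hc; push_neg at hc
          exact G.betw k hkℓ b hlt hc hmem
        exact ih (k+1) (by omega) (by omega) h2
  exact step (ℓ - 0) 0 (Nat.zero_le ℓ) rfl hb

/-- The key left-boundary fact: `(x, Y 0)` is a lattice point. -/
private lemma good_q0 (hδ : IsIncrement ν δ) (hT : IsDNTree ν δ T)
    (G : GoodData ν δ T ℓ x' x Y) : ν.sum ≤ x + Sf ν δ (Y 0) := by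
  by_contra hx
  push_neg at hx
  set u := ν.sum - Sf ν δ (Y 0) with hu
  have hSlt : Sf ν δ (Y 0) < ν.sum := by omega
  have hxu : x < u := by omega
  have hux' : u < x' := by have := G.rel0; omega
  have hYlenℓ : Y ℓ < ν.length := Y_len hT G le_rfl
  have hz : (u, Y ℓ) ∈ Ldn ν δ := by
    rw [mem_Ldn]
    refine ⟨hYlenℓ, ?_, ?_⟩
    · have := Sf_mono hδ (Y_le G (Nat.zero_le ℓ) le_rfl); dsimp only; omega
    · have h1 := x'_le_Af hT G (Nat.zero_le ℓ)
      have h2 := Af_mono hδ (Y_le G (Nat.zero_le ℓ) le_rfl)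
      dsimp only; omega
  have hzT : (u, Y ℓ) ∉ T := G.row u hxu hux'
  obtain ⟨t, ht, hi⟩ := tree_conflict hT hz hzT
  obtain ⟨hdir, hcorner⟩ := hi
  rw [mem_Lpts hδ] at hcorner
  rcases hdir with ⟨h1, h2⟩ | ⟨h1, h2⟩
  · -- t SW z'
    dsimp only at h1 h2 hcorner
    have htL := hT.1 ht; rw [mem_Ldn] at htL
    rcases Nat.lt_or_ge t.2 (Y 0) with hb | hb
    · have := Sf_mono hδ hb.le
      omega
    · have hA : x' ≤ Af ν δ t.2 := le_trans (x'_le_Af hT G (Nat.zero_le ℓ)) (Af_mono hδ hb)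
      exact hT.2.1 _ ht _ (G.memS ℓ le_rfl)
        (incomp_sw hδ (p := t) (q := (x', Y ℓ)) (by omega) (by omega) htL.1 hA)
  · -- t NE z'
    dsimp only at h1 h2 hcorner
    rw [max_eq_left (by omega), min_eq_right (by omega)] at hcorner
    have htA : t.1 ≤ Af ν δ (Y ℓ) := hcorner.2
    rcases Nat.lt_trichotomy t.1 x' with hc | hc | hc
    · exact hT.2.1 _ G.memQ _ ht
        (incomp_sw hδ (p := (x, Y ℓ)) (q := t) (by omega) (by omega) hYlenℓ htA)
    · have htT : (x', t.2) ∈ T := by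
        have : t = (x', t.2) := by rw [← hc]
        rwa [← this]
      exact G.top t.2 (by omega) htT
    · exact hT.2.1 _ (G.memS ℓ le_rfl) _ ht
        (incomp_sw hδ (p := (x', Y ℓ)) (q := t) (by omega) (by omega) hYlenℓ htA)

end GoodLemmas
private def QSt (x : ℕ) (Y : ℕ → ℕ) (k ℓ : ℕ) : Set (ℕ × ℕ) :=
  {p | p.1 = x ∧ ∃ i, k ≤ i ∧ i < ℓ ∧ p.2 = Y i}
private def SSt (x' : ℕ) (Y : ℕ → ℕ) (k ℓ : ℕ) : Set (ℕ × ℕ) :=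
  {p | p.1 = x' ∧ ∃ i, k < i ∧ i ≤ ℓ ∧ p.2 = Y i}
private def Ch (T : Set (ℕ × ℕ)) (x' x : ℕ) (Y : ℕ → ℕ) (ℓ k : ℕ) : Set (ℕ × ℕ) :=
  (T \ SSt x' Y k ℓ) ∪ QSt x Y k ℓ

section Constr
variable {ν δ : List ℕ} {T : Set (ℕ × ℕ)} {ℓ x' x : ℕ} {Y : ℕ → ℕ} {k k' : ℕ}

private lemma Y_inj (G : GoodData ν δ T ℓ x' x Y) (hk : k ≤ ℓ) (hk' : k' ≤ ℓ)
    (h : Y k = Y k') : k = k' := by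
  rcases Nat.lt_trichotomy k k' with hc | hc | hc
  · have := Y_lt G hc hk'; omega
  · exact hc
  · have := Y_lt G hc hk; omega

private lemma qk_not_mem_T (hδ : IsIncrement ν δ) (hT : IsDNTree ν δ T)
    (G : GoodData ν δ T ℓ x' x Y) (hk : k < ℓ) : (x, Y k) ∉ T := by
  intro hm
  have := big_claim hδ hT G le_rfl G.hxx (Y_le G (Nat.zero_le k) hk.le)
    (Y_le G hk.le le_rfl) hm
  have := Y_lt G hk le_rfl
  omega

private lemma qmem (G : GoodData ν δ T ℓ x' x Y) (hk : k ≤ ℓ) :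
    (x, Y k) ∈ Ch T x' x Y ℓ 0 := by
  rcases Nat.lt_or_ge k ℓ with h | h
  · exact Or.inr ⟨rfl, k, Nat.zero_le k, h, rfl⟩
  · have : k = ℓ := by omega
    subst this
    refine Or.inl ⟨G.memQ, ?_⟩
    rintro ⟨h1, -⟩
    dsimp at h1
    have := G.hxx
    omega

private lemma smem_B (G : GoodData ν δ T ℓ x' x Y) :
    (x', Y 0) ∈ Ch T x' x Y ℓ 0 := by
  refine Or.inl ⟨G.memS 0 (Nat.zero_le ℓ), ?_⟩
  rintro ⟨-, i, hi1, hi2, hi3⟩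
  have := Y_inj G (Nat.zero_le ℓ) hi2 hi3
  omega

private lemma sset_not_mem_B (hi1 : 1 ≤ i) (hi2 : i ≤ ℓ) (hx : x < x') :
    (x', Y i) ∉ Ch T x' x Y ℓ 0 := by
  rintro (⟨-, hs⟩ | ⟨h1, -⟩)
  · exact hs ⟨rfl, i, by omega, hi2, rfl⟩
  · dsimp at h1; omega

private lemma chain_last : Ch T x' x Y ℓ ℓ = T := by
  ext p
  constructor
  · rintro (⟨h, -⟩ | ⟨-, i, hi1, hi2, -⟩)
    · exact h
    · omega
  · intro h
    exact Or.inl ⟨h, by rintro ⟨-, i, hi1, hi2, -⟩; omega⟩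

private lemma rotation_step (hδ : IsIncrement ν δ) (hT : IsDNTree ν δ T)
    (G : GoodData ν δ T ℓ x' x Y) (hk : k < ℓ) :
    RotationAt (nuCheck ν δ) (Ch T x' x Y ℓ k) (x, Y k) (Ch T x' x Y ℓ (k+1)) := by
  refine ⟨(x, Y (k+1)), (x', Y k), ?_, ?_, ?_, rfl, G.mono k hk, rfl, G.hxx, ?_, ?_⟩
  · -- p ∈ c k
    rcases Nat.lt_or_ge (k+1) ℓ with h | h
    · exact Or.inr ⟨rfl, k+1, by omega, h, rfl⟩
    · have hkl : k + 1 = ℓ := by omega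
      refine Or.inl ⟨by rw [hkl]; exact G.memQ, ?_⟩
      rintro ⟨h1, -⟩
      dsimp at h1; have := G.hxx; omega
  · -- q ∈ c k
    exact Or.inr ⟨rfl, k, le_rfl, hk, rfl⟩
  · -- r ∈ c k
    refine Or.inl ⟨G.memS k hk.le, ?_⟩
    rintro ⟨-, i, hi1, hi2, hi3⟩
    have := Y_inj G hk.le hi2 hi3
    omega
  · -- emptiness
    rintro s hs hs1 hs2 hs3 hs4
    dsimp only at hs1 hs2 hs3 hs4
    rcases hs with ⟨hsT, hsS⟩ | ⟨hq1, i, hi1, hi2, hi3⟩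
    · rcases eq_or_lt_of_le hs2 with he | hlt
      · -- s.1 = x'
        have hsT' : (x', s.2) ∈ T := by
          have hse : s = (x', s.2) := Prod.ext he rfl
          rwa [hse] at hsT
        obtain ⟨i, hi, hieq⟩ := colx'_rows G hsT'
          (le_trans (Y_le G (Nat.zero_le k) hk.le) hs3)
        have hik : k ≤ i := by
          by_contra hc; push_neg at hc
          have := Y_lt G hc hk.le; omega
        have hik1 : i ≤ k + 1 := by
          by_contra hc; push_neg at hc
          have := Y_lt G (show k+1 < i by omega) hi; omega
        rcases eq_or_lt_of_le hik with rfl | hik'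
        · right; right
          exact Prod.ext he hieq
        · exfalso
          have : i = k + 1 := by omega
          subst this
          exact hsS ⟨by omega, k+1, by omega, hi, hieq⟩
      · -- s.1 < x'
        have hbc := big_claim hδ hT G hs1 hlt
          (le_trans (Y_le G (Nat.zero_le k) hk.le) hs3)
          (le_trans hs4 (Y_le G (by omega : k+1 ≤ ℓ) le_rfl)) hsT
        have hkl : Y ℓ ≤ Y (k+1) := by omega
        have hkeq : k + 1 = ℓ := by
          by_contra hc
          have := Y_lt G (show k+1 < ℓ by omega) le_rfl; omega
        left
        refine Prod.ext hbc.1 ?_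
        rw [hbc.2, hkeq]
    · -- s in QSt
      have hik : k ≤ i := hi1
      have hile : Y i ≤ Y (k+1) := by rw [← hi3]; exact hs4
      have hige : Y k ≤ Y i := by rw [← hi3]; exact hs3
      have hi1' : i ≤ k + 1 := by
        by_contra hc; push_neg at hc
        have := Y_lt G (show k+1 < i by omega) (by omega); omega
      have hsp : s = (x, Y i) := Prod.ext hq1 hi3
      rcases eq_or_lt_of_le hik with rfl | h
      · right; left; exact hsp
      · left
        have : i = k + 1 := by omega
        rw [hsp, this]
  · -- insert formula
    ext p
    simp only [Set.mem_insert_iff, Set.mem_diff, Set.mem_singleton_iff]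
    constructor
    · rintro (⟨hpT, hpS⟩ | ⟨hq1, i, hi1, hi2, hi3⟩)
      · by_cases he : p = (x', Y (k+1))
        · exact Or.inl he
        · refine Or.inr ⟨Or.inl ⟨hpT, ?_⟩, ?_⟩
          · rintro ⟨h1, i, hi1, hi2, hi3⟩
            rcases Nat.lt_or_ge (k+1) i with h | h
            · exact hpS ⟨h1, i, h, hi2, hi3⟩
            · have : i = k + 1 := by omega
              subst this
              exact he (Prod.ext h1 hi3)
          · intro hc
            rw [hc] at hpT
            exact qk_not_mem_T hδ hT G hk hpT
      · refine Or.inr ⟨Or.inr ⟨hq1, i, by omega, hi2, hi3⟩, ?_⟩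
        intro hc
        rw [hc] at hi3
        dsimp at hi3
        have := Y_inj G (by omega : i ≤ ℓ) hk.le hi3.symm
        omega
    · rintro (he | ⟨hp, hpne⟩)
      · subst he
        refine Or.inl ⟨G.memS (k+1) hk, ?_⟩
        rintro ⟨-, i, hi1, hi2, hi3⟩
        have := Y_inj G (by omega : k+1 ≤ ℓ) hi2 hi3
        omega
      · rcases hp with ⟨hpT, hpS⟩ | ⟨hq1, i, hi1, hi2, hi3⟩
        · refine Or.inl ⟨hpT, ?_⟩
          rintro ⟨h1, i, hi1, hi2, hi3⟩
          exact hpS ⟨h1, i, by omega, hi2, hi3⟩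
        · have : k ≤ i := by
            rcases Nat.lt_or_ge i (k+1) with h | h
            · have : i = k := by omega
              subst this
              exfalso
              exact hpne (Prod.ext hq1 hi3)
            · omega
          rcases eq_or_lt_of_le this with rfl | h
          · exfalso
            exact hpne (Prod.ext hq1 hi3)
          · exact Or.inr ⟨hq1, i, by omega, hi2, hi3⟩
end Constr
section Constr2
variable {ν δ : List ℕ} {T : Set (ℕ × ℕ)} {ℓ x' x : ℕ} {Y : ℕ → ℕ} {k k' : ℕ}

private lemma B_subset (hδ : IsIncrement ν δ) (hT : IsDNTree ν δ T)
    (G : GoodData ν δ T ℓ x' x Y) : Ch T x' x Y ℓ 0 ⊆ Ldn ν δ := by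
  rintro p (⟨hpT, -⟩ | ⟨h1, i, -, hi2, hi3⟩)
  · exact hT.1 hpT
  · rw [mem_Ldn]
    have hYlen := Y_len hT G hi2.le
    have hq0 := good_q0 hδ hT G
    have hSm := Sf_mono hδ (Y_le G (Nat.zero_le i) hi2.le)
    have hxA := x'_le_Af hT G hi2.le
    have := G.hxx
    rw [h1, hi3]
    exact ⟨by omega, by omega, by omega⟩

/-- `(x, Y k)` is compatible with any tree node outside the removed set. -/
private lemma compat_qk (hδ : IsIncrement ν δ) (hT : IsDNTree ν δ T)
    (G : GoodData ν δ T ℓ x' x Y) (hk : k ≤ ℓ) {t : ℕ × ℕ} (ht : t ∈ T)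
    (htS : t ∉ SSt x' Y 0 ℓ) : ¬ Incomp (nuCheck ν δ) (x, Y k) t := by
  have htL := hT.1 ht; rw [mem_Ldn] at htL
  have hYlen := Y_len hT G hk
  have hYlenℓ := Y_len hT G (le_refl ℓ)
  rintro ⟨hdir, hcorner⟩
  rw [mem_Lpts hδ] at hcorner
  rcases hdir with ⟨h1, h2⟩ | ⟨h1, h2⟩
  · -- (x, Y k) SW t
    dsimp only at h1 h2 hcorner
    rw [max_eq_right (by omega), min_eq_left (by omega)] at hcorner
    have htA : t.1 ≤ Af ν δ (Y k) := hcorner.2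
    rcases Nat.lt_trichotomy t.1 x' with hc | hc | hc
    · -- t.1 < x'
      rcases Nat.lt_trichotomy t.2 (Y ℓ) with hc2 | hc2 | hc2
      · have hY0 : Y 0 ≤ t.2 := le_trans (Y_le G (Nat.zero_le k) hk) h2.le
        have hA : x' ≤ Af ν δ t.2 :=
          le_trans (x'_le_Af hT G (Nat.zero_le ℓ)) (Af_mono hδ hY0)
        exact hT.2.1 _ ht _ (G.memS ℓ le_rfl)
          (incomp_sw hδ (p := t) (q := (x', Y ℓ)) hc hc2 htL.1 hA)
      · have hte : t = (t.1, Y ℓ) := Prod.ext rfl hc2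
        rw [hte] at ht
        exact G.row t.1 (by omega) hc ht
      · have hAA : t.1 ≤ Af ν δ (Y ℓ) := le_trans htA (Af_mono hδ (Y_le G hk le_rfl))
        exact hT.2.1 _ G.memQ _ ht
          (incomp_sw hδ (p := (x, Y ℓ)) (q := t) (by omega) (by omega) hYlenℓ hAA)
    · -- t.1 = x'
      have hte : t = (x', t.2) := Prod.ext hc rfl
      have htT' : (x', t.2) ∈ T := by rwa [hte] at ht
      obtain ⟨i, hi, hieq⟩ := colx'_rows G htT'
        (le_trans (Y_le G (Nat.zero_le k) hk) h2.le)
      apply htS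
      refine ⟨hc, i, ?_, hi, hieq⟩
      by_contra hi0
      have : i = 0 := by omega
      subst this
      have := Y_le G (Nat.zero_le k) hk
      omega
    · -- x' < t.1
      exact hT.2.1 _ (G.memS k hk) _ ht
        (incomp_sw hδ (p := (x', Y k)) (q := t) hc h2 hYlen htA)
  · -- t SW (x, Y k)
    dsimp only at h1 h2 hcorner
    rw [max_eq_left (by omega), min_eq_right (by omega)] at hcorner
    have hA : x ≤ Af ν δ t.2 := hcorner.2
    exact hT.2.1 _ ht _ G.memQ
      (incomp_sw hδ (p := t) (q := (x, Y ℓ))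
        h1 (lt_of_lt_of_le h2 (Y_le G hk le_rfl)) htL.1 hA)

private lemma B_compat (hδ : IsIncrement ν δ) (hT : IsDNTree ν δ T)
    (G : GoodData ν δ T ℓ x' x Y) : PairwiseCompat (nuCheck ν δ) (Ch T x' x Y ℓ 0) := by
  have key : ∀ p ∈ Ch T x' x Y ℓ 0, ∀ q ∈ Ch T x' x Y ℓ 0,
      q ∈ QSt x Y 0 ℓ → ¬ Incomp (nuCheck ν δ) p q := by
    rintro p hp q hq ⟨hq1, i, -, hi2, hi3⟩
    have hqe : q = (x, Y i) := Prod.ext hq1 hi3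
    rcases hp with ⟨hpT, hpS⟩ | ⟨hp1, i', -, hi2', hi3'⟩
    · rw [hqe]
      exact fun hi => compat_qk hδ hT G hi2.le hpT hpS (incomp_comm hi)
    · exact not_incomp_col (by rw [hp1, hq1])
  intro p hp q hq
  rcases hq with hq' | hq'
  · rcases hp with hp' | hp'
    · exact hT.2.1 p hp'.1 q hq'.1
    · intro hi
      exact key q (Or.inl hq') p (Or.inr hp') hp' (incomp_comm hi)
  · exact key p hp q (Or.inr hq') hq'

private lemma B_consec (hδ : IsIncrement ν δ) (hT : IsDNTree ν δ T)
    (G : GoodData ν δ T ℓ x' x Y) :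
    ConsecCol (Ch T x' x Y ℓ 0) (fun k => (x, Y k)) ℓ := by
  refine ⟨fun i hi => qmem G hi, fun i _ => rfl, fun i hi => G.mono i hi, ?_⟩
  rintro i hi s hs hs1 hs2 hs3
  dsimp only at hs1 hs2 hs3
  rcases hs with ⟨hsT, -⟩ | ⟨-, i', -, hi2', hi3'⟩
  · have hse : s = (x, s.2) := Prod.ext hs1 rfl
    rw [hse] at hsT
    have hbc := big_claim hδ hT G le_rfl G.hxx
      (le_trans (Y_le G (Nat.zero_le i) hi.le) hs2.le)
      (le_trans hs3.le (Y_le G hi le_rfl)) hsT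
    have := Y_lt G hi le_rfl
    have hYi1 : Y (i+1) ≤ Y ℓ := Y_le G hi le_rfl
    omega
  · rw [hi3'] at hs2 hs3
    have h1 : i < i' := by
      by_contra hc; push_neg at hc
      have := Y_le G hc hi.le; omega
    have h2 : i' < i + 1 := by
      by_contra hc; push_neg at hc
      have := Y_le G hc hi2'.le
      have := Y_le G (le_refl (i+1)) (by omega : i + 1 ≤ ℓ)
      omega
    omega

end Constr2
section Constr3
variable {ν δ : List ℕ} {T : Set (ℕ × ℕ)} {ℓ x' x : ℕ} {Y : ℕ → ℕ}

private lemma findG {P : ℕ → Prop} [DecidablePred P] {n m : ℕ} (hm : m ≤ n) (hP : P m) :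
    ∃ K, K ≤ n ∧ m ≤ K ∧ P K ∧ ∀ i, i ≤ n → P i → i ≤ K :=
  ⟨Nat.findGreatest P n, Nat.findGreatest_le n, Nat.le_findGreatest hm hP,
    Nat.findGreatest_spec hm hP, fun i hi hPi => Nat.le_findGreatest hi hPi⟩

private lemma B_conflict (hδ : IsIncrement ν δ) (hT : IsDNTree ν δ T)
    (G : GoodData ν δ T ℓ x' x Y) (hℓ : 1 ≤ ℓ) {z : ℕ × ℕ} (hz : z ∈ Ldn ν δ)
    (hzB : z ∉ Ch T x' x Y ℓ 0) : ∃ t ∈ Ch T x' x Y ℓ 0, Incomp (nuCheck ν δ) t z := by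
  have hzL := mem_Ldn.1 hz
  have hYlenℓ := Y_len hT G (le_refl ℓ)
  have hq0 := good_q0 hδ hT G
  by_cases hzT : z ∈ T
  · -- z is a removed node (x', Y i)
    have hzS : z ∈ SSt x' Y 0 ℓ := by
      by_contra hc; exact hzB (Or.inl ⟨hzT, hc⟩)
    obtain ⟨hz1, i, hi1, hi2, hz2⟩ := hzS
    refine ⟨(x, Y (i-1)), qmem G (by omega), ?_⟩
    apply incomp_sw hδ (p := (x, Y (i-1))) (q := z)
    · dsimp only; rw [hz1]; exact G.hxx
    · dsimp only; rw [hz2]; exact Y_lt G (by omega) hi2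
    · exact Y_len hT G (by omega)
    · rw [hz1]; exact x'_le_Af hT G (by omega)
  · obtain ⟨t, ht, hti⟩ := tree_conflict hT hz hzT
    by_cases htS : t ∈ SSt x' Y 0 ℓ
    swap
    · exact ⟨t, Or.inl ⟨ht, htS⟩, hti⟩
    obtain ⟨ht1, j, hj1, hj2, ht2⟩ := htS
    obtain ⟨hdir, hcorner⟩ := hti
    rw [mem_Lpts hδ] at hcorner
    rcases hdir with ⟨h1, h2⟩ | ⟨h1, h2⟩
    · -- t SW z : x' < z.1, Y j < z.2
      rw [max_eq_right h1.le, min_eq_left h2.le] at hcorner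
      rw [ht1] at h1
      rw [ht2] at h2 hcorner
      obtain ⟨K, hKl, hjK, hPK, -⟩ := findG (P := fun k => Y k < z.2) hj2 h2
      refine ⟨(x, Y K), qmem G hKl, ?_⟩
      apply incomp_sw hδ (p := (x, Y K)) (q := z)
      · dsimp only; have := G.hxx; omega
      · exact hPK
      · exact Y_len hT G hKl
      · exact le_trans hcorner.2 (Af_mono hδ (Y_le G hjK hKl))
    · -- z SW t : z.1 < x', z.2 < Y j
      rw [max_eq_left h1.le, min_eq_right h2.le] at hcorner
      rw [ht1] at h1 hcorner
      rw [ht2] at h2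
      have hx'A : x' ≤ Af ν δ z.2 := hcorner.2
      rcases Nat.lt_or_ge z.2 (Y 0) with hz0 | hz0
      · refine ⟨(x', Y 0), smem_B G, incomp_comm ?_⟩
        exact incomp_sw hδ (p := z) (q := (x', Y 0)) h1 hz0 hzL.1 hx'A
      · -- Y 0 ≤ z.2 < Y j ≤ Y ℓ
        obtain ⟨K, hKl, -, hPK, hmax⟩ := findG (P := fun k => Y k ≤ z.2) (Nat.zero_le ℓ) hz0
        have hKj : K < j := by
          by_contra hc; push_neg at hc
          have := Y_le G hc hKl; omega
        have hK1 : z.2 < Y (K+1) := by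
          by_contra hc; push_neg at hc
          have := hmax (K+1) (by omega) hc
          omega
        rcases Nat.lt_or_ge z.1 x with hzx | hzx
        · refine ⟨(x, Y (K+1)), qmem G (by omega), incomp_comm ?_⟩
          apply incomp_sw hδ (p := z) (q := (x, Y (K+1))) hzx hK1 hzL.1
          dsimp only
          have := G.hxx; omega
        · rcases eq_or_lt_of_le hPK with hEq | hLt
          · -- z.2 = Y K
            rcases eq_or_lt_of_le hzx with hzx1 | hzx1
            · exfalso
              apply hzB
              rw [show z = (x, Y K) from Prod.ext hzx1.symm hEq.symm]
              exact qmem G hKl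
            · -- x < z.1 < x' : use w' = (z.1, Y ℓ)
              have hw'L : (z.1, Y ℓ) ∈ Ldn ν δ := by
                rw [mem_Ldn]
                have hs := Sf_mono hδ (Y_le G (Nat.zero_le ℓ) le_rfl)
                have ha := x'_le_Af hT G (le_refl ℓ)
                exact ⟨hYlenℓ, by dsimp only; omega, by dsimp only; omega⟩
              have hw'T : (z.1, Y ℓ) ∉ T := G.row z.1 hzx1 h1
              obtain ⟨t', ht', hti'⟩ := tree_conflict hT hw'L hw'T
              have ht'L := mem_Ldn.1 (hT.1 ht')
              obtain ⟨hdir', hcorner'⟩ := hti'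
              rw [mem_Lpts hδ] at hcorner'
              rcases hdir' with ⟨g1, g2⟩ | ⟨g1, g2⟩
              · -- t' SW w'
                dsimp only at g1 g2 hcorner'
                rw [max_eq_right g1.le, min_eq_left g2.le] at hcorner'
                rcases Nat.lt_or_ge t'.2 z.2 with hc2 | hc2
                · refine ⟨t', Or.inl ⟨ht', ?_⟩, ?_⟩
                  · rintro ⟨e1, -⟩; omega
                  · exact incomp_sw hδ (p := t') (q := z) g1 hc2 ht'L.1 hcorner'.2
                · exfalso
                  have hA : x' ≤ Af ν δ t'.2 :=
                    le_trans (x'_le_Af hT G (Nat.zero_le ℓ)) (Af_mono hδ (by omega))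
                  exact hT.2.1 _ ht' _ (G.memS ℓ le_rfl)
                    (incomp_sw hδ (p := t') (q := (x', Y ℓ)) (by omega) g2 ht'L.1 hA)
              · -- w' SW t'
                dsimp only at g1 g2 hcorner'
                rw [max_eq_left g1.le, min_eq_right g2.le] at hcorner'
                exact absurd (incomp_sw hδ (p := (x, Y ℓ)) (q := t')
                    (by dsimp only; omega) g2 hYlenℓ hcorner'.2)
                  (hT.2.1 _ G.memQ _ ht')
          · -- Y K < z.2 < Y (K+1) : use w = (x', z.2)
            have hKlt : K < ℓ := by omega
            have hwL : (x', z.2) ∈ Ldn ν δ := by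
              rw [mem_Ldn]
              exact ⟨hzL.1, by dsimp only; have := hzL.2.1; omega, hx'A⟩
            have hwT : (x', z.2) ∉ T := G.betw K hKlt z.2 hLt hK1
            obtain ⟨t', ht', hti'⟩ := tree_conflict hT hwL hwT
            have ht'L := mem_Ldn.1 (hT.1 ht')
            obtain ⟨hdir', hcorner'⟩ := hti'
            rw [mem_Lpts hδ] at hcorner'
            rcases hdir' with ⟨g1, g2⟩ | ⟨g1, g2⟩
            · -- t' SW w
              dsimp only at g1 g2 hcorner'
              rw [max_eq_right g1.le, min_eq_left g2.le] at hcorner'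
              exfalso
              rcases Nat.lt_or_ge t'.2 (Y 0) with hc0 | hc0
              · exact hT.2.1 _ ht' _ (G.memS 0 (Nat.zero_le ℓ))
                  (incomp_sw hδ (p := t') (q := (x', Y 0)) g1 hc0 ht'L.1 hcorner'.2)
              · have hA : x' ≤ Af ν δ t'.2 :=
                  le_trans (x'_le_Af hT G (Nat.zero_le ℓ)) (Af_mono hδ hc0)
                have ht'Y : t'.2 < Y ℓ := by
                  have := Y_le G hj2 le_rfl; omega
                exact hT.2.1 _ ht' _ (G.memS ℓ le_rfl)
                  (incomp_sw hδ (p := t') (q := (x', Y ℓ)) g1 ht'Y ht'L.1 hA)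
            · -- w SW t'
              dsimp only at g1 g2 hcorner'
              rw [max_eq_left g1.le, min_eq_right g2.le] at hcorner'
              refine ⟨t', Or.inl ⟨ht', ?_⟩, incomp_comm ?_⟩
              · rintro ⟨e1, -⟩; omega
              · exact incomp_sw hδ (p := z) (q := t') (by omega) g2 hzL.1 hcorner'.2

private lemma B_tree (hδ : IsIncrement ν δ) (hT : IsDNTree ν δ T)
    (G : GoodData ν δ T ℓ x' x Y) (hℓ : 1 ≤ ℓ) : IsDNTree ν δ (Ch T x' x Y ℓ 0) := by
  refine ⟨B_subset hδ hT G, B_compat hδ hT G, ?_⟩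
  intro T' hsub hsub' hcomp
  apply Set.Subset.antisymm _ hsub
  intro z hz
  by_contra hzB
  obtain ⟨t, htB, hti⟩ := B_conflict hδ hT G hℓ (hsub' hz) hzB
  exact hcomp t (hsub htB) z hz hti

/-- The construction: a `GoodData` yields a right interval with top `T`. -/
private lemma constr (hδ : IsIncrement ν δ) (hT : IsDNTree ν δ T)
    (G : GoodData ν δ T ℓ x' x Y) (hℓ : 1 ≤ ℓ) :
    IsRightDNItv ν δ (Ch T x' x Y ℓ 0) T ℓ := by
  refine ⟨B_tree hδ hT G hℓ, hℓ, fun k => (x, Y k), B_consec hδ hT G, Ch T x' x Y ℓ, rfl,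
    chain_last, fun k hk => rotation_step hδ hT G hk⟩

end Constr3
section Exists
variable {ν δ : List ℕ} {T : Set (ℕ × ℕ)} {ℓ x' x : ℕ} {Y : ℕ → ℕ}

/-- A relevant top-of-column node of a tree has a tree node to its left in its row. -/
private lemma left_nbr (hδ : IsIncrement ν δ) (hT : IsDNTree ν δ T) {x' y' : ℕ}
    (hs : (x', y') ∈ T) (htop : ∀ b, y' < b → (x', b) ∉ T)
    (hrel : ν.sum + 1 ≤ x' + Sf ν δ y') (hx1 : 1 ≤ x') :
    ∃ a, a < x' ∧ (a, y') ∈ T := by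
  classical
  by_contra hno
  push_neg at hno
  have hsL := mem_Ldn.1 (hT.1 hs)
  dsimp only at hsL
  have hAS := m_le_Af_add_Sf hδ (ν := ν) y'
  have base : ∀ e, e < x' → ν.sum ≤ e + Sf ν δ y' →
      (e = 0 ∨ ν.sum = e + Sf ν δ y' ∨ ∃ f, y' < f ∧ (e, f) ∈ T) →
      ∃ e', e < e' ∧ e' < x' ∧ ν.sum ≤ e' + Sf ν δ y' ∧ ∃ f, y' < f ∧ (e', f) ∈ T := by
    intro e he hm hsw
    have heL : (e, y') ∈ Ldn ν δ := by
      rw [mem_Ldn]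
      exact ⟨hsL.1, hm, by dsimp only; omega⟩
    obtain ⟨t, ht, hti⟩ := tree_conflict hT heL (hno e he)
    have htL := mem_Ldn.1 (hT.1 ht)
    obtain ⟨hdir, hcorner⟩ := hti
    rw [mem_Lpts hδ] at hcorner
    rcases hdir with ⟨g1, g2⟩ | ⟨g1, g2⟩
    · -- t SW (e, y')
      exfalso
      dsimp only at g1 g2
      rw [max_eq_right g1.le, min_eq_left g2.le] at hcorner
      dsimp only at hcorner
      rcases hsw with h0 | hmeq | ⟨f, hf, hfT⟩
      · omega
      · have := Sf_mono hδ (show t.2 ≤ y' by omega)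
        omega
      · exact hT.2.1 _ ht _ hfT
          (incomp_sw hδ (p := t) (q := (e, f)) g1 (by omega) htL.1 hcorner.2)
    · -- (e, y') SW t
      dsimp only at g1 g2 hcorner
      rw [max_eq_left g1.le, min_eq_right g2.le] at hcorner
      rcases Nat.lt_trichotomy t.1 x' with hc | hc | hc
      · exact ⟨t.1, g1, hc, by omega, t.2, g2, by
          rwa [show t = (t.1, t.2) from rfl] at ht⟩
      · exfalso
        have hte : t = (x', t.2) := Prod.ext hc rfl
        rw [hte] at ht
        exact htop t.2 g2 ht
      · exfalso
        exact hT.2.1 _ hs _ ht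
          (incomp_sw hδ (p := (x', y')) (q := t) hc g2 hsL.1 hcorner.2)
  set e₀ := ν.sum - Sf ν δ y' with he₀
  obtain ⟨e₁, -, he1, hm1, hf1⟩ := base e₀ (by omega) (by omega)
    (by rcases le_or_gt (Sf ν δ y') ν.sum with h | h
        · right; left; omega
        · left; omega)
  obtain ⟨K, hKb, -, hPK, hmax⟩ := findG
    (P := fun e => e < x' ∧ ν.sum ≤ e + Sf ν δ y' ∧ ∃ f, y' < f ∧ (e, f) ∈ T)
    (n := x' - 1) (m := e₁) (by omega) ⟨he1, hm1, hf1⟩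
  obtain ⟨hK1, hK2, f, hf, hfT⟩ := hPK
  obtain ⟨e₂, he2, he2', hm2, hf2⟩ := base K hK1 hK2 (Or.inr (Or.inr ⟨f, hf, hfT⟩))
  have := hmax e₂ (by omega) ⟨he2', hm2, hf2⟩
  omega

private lemma good_rcol (hδ : IsIncrement ν δ) (hT : IsDNTree ν δ T)
    (G : GoodData ν δ T ℓ x' x Y) : ℓ + 1 ≤ rcolTN ν δ T x' := by
  classical
  have hsub : ↑((Finset.range (ℓ+1)).image (fun k => ((x' : ℕ), Y k))) ⊆
      {p ∈ T | p.1 = x' ∧ Relevant ν δ p} := by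
    intro p hp
    simp only [Finset.coe_image, Set.mem_image, Finset.mem_coe, Finset.mem_range] at hp
    obtain ⟨k, hk, rfl⟩ := hp
    refine ⟨G.memS k (by omega), rfl, ?_⟩
    rw [relevant_iff hδ]
    refine ⟨hT.1 (G.memS k (by omega)), by dsimp only; have := G.hxx; omega, ?_⟩
    exact relk hδ G (by omega)
  have hcard : ((Finset.range (ℓ+1)).image (fun k => ((x' : ℕ), Y k))).card = ℓ + 1 := by
    rw [Finset.card_image_of_injOn, Finset.card_range]
    intro a ha b hb hab
    simp only [Finset.coe_range, Set.mem_Iio] at ha hb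
    exact Y_inj G (by omega) (by omega) (congrArg Prod.snd hab)
  have hfin : {p ∈ T | p.1 = x' ∧ Relevant ν δ p}.Finite :=
    Set.Finite.subset Ldn_finite (fun p hp => hT.1 hp.1)
  rw [rcolTN]
  calc ℓ + 1 = (↑((Finset.range (ℓ+1)).image (fun k => ((x' : ℕ), Y k))) : Set (ℕ×ℕ)).ncard := by
        rw [Set.ncard_coe_finset, hcard]
    _ ≤ _ := Set.ncard_le_ncard hsub hfin

private lemma TdiffB (hT : IsDNTree ν δ T) (G : GoodData ν δ T ℓ x' x Y) :
    T \ Ch T x' x Y ℓ 0 = SSt x' Y 0 ℓ := by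
  ext p
  constructor
  · rintro ⟨hpT, hpB⟩
    by_contra hc
    exact hpB (Or.inl ⟨hpT, hc⟩)
  · rintro ⟨h1, i, hi1, hi2, h2⟩
    have hpe : p = (x', Y i) := Prod.ext h1 h2
    rw [hpe]
    exact ⟨G.memS i hi2, sset_not_mem_B hi1 hi2 G.hxx⟩

/-- From a qualifying column, extract the canonical data. -/
private lemma exists_good (hδ : IsIncrement ν δ) (hT : IsDNTree ν δ T) (hℓ : 1 ≤ ℓ)
    (hx'1 : 1 ≤ x') (hcnt : ℓ + 1 ≤ rcolTN ν δ T x') :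
    ∃ x Y, GoodData ν δ T ℓ x' x Y := by
  classical
  have hRelfin : {p ∈ T | p.1 = x' ∧ Relevant ν δ p}.Finite :=
    Set.Finite.subset Ldn_finite (fun p hp => hT.1 hp.1)
  have hColfin : {p ∈ T | p.1 = x'}.Finite :=
    Set.Finite.subset Ldn_finite (fun p hp => hT.1 hp.1)
  set R : Finset ℕ := hColfin.toFinset.image Prod.snd with hR
  set l : List ℕ := R.sort (·≤·) with hl
  have hrelcard : ℓ + 1 ≤ (hRelfin.toFinset.image Prod.snd).card := by
    rw [Finset.card_image_of_injOn]
    · rw [rcolTN, Set.ncard_eq_toFinset_card _ hRelfin] at hcnt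
      exact hcnt
    · intro a ha b hb hab
      simp only [Finset.mem_coe, Set.Finite.mem_toFinset, Set.mem_setOf_eq] at ha hb
      exact Prod.ext (ha.2.1.trans hb.2.1.symm) hab
  have hsubR : hRelfin.toFinset.image Prod.snd ⊆ R := by
    intro b hb
    simp only [Finset.mem_image, Set.Finite.mem_toFinset, Set.mem_setOf_eq, hR] at hb ⊢
    obtain ⟨p, hp, hpe⟩ := hb
    exact ⟨p, ⟨hp.1, hp.2.1⟩, hpe⟩
  have hlen : ℓ + 1 ≤ l.length := by
    rw [hl, Finset.length_sort]
    exact le_trans hrelcard (Finset.card_le_card hsubR)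
  set d := l.length - (ℓ + 1) with hd
  have hmemR : ∀ b ∈ R, (x', b) ∈ T := by
    intro b hb
    simp only [hR, Finset.mem_image, Set.Finite.mem_toFinset, Set.mem_setOf_eq] at hb
    obtain ⟨p, ⟨hp1, hp2⟩, hpe⟩ := hb
    rwa [show (x', b) = p from (Prod.ext hp2 hpe).symm]
  have hgetR : ∀ i, i < l.length → l.getD i 0 ∈ R := by
    intro i hi
    rw [← Finset.mem_sort (α := ℕ) (· ≤ ·), ← hl, List.getD_eq_getElem _ _ hi]
    exact List.getElem_mem hi
  have hsorted : ∀ i j, i < j → j < l.length → l.getD i 0 < l.getD j 0 := by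
    intro i j hij hjl
    have hs : l.Pairwise (·<·) := by rw [hl]; exact R.sortedLT_sort.pairwise
    rw [List.getD_eq_getElem _ _ (by omega), List.getD_eq_getElem _ _ hjl]
    exact List.pairwise_iff_get.mp hs ⟨i, by omega⟩ ⟨j, hjl⟩ hij
  have hRidx : ∀ b ∈ R, ∃ i, i < l.length ∧ b = l.getD i 0 := by
    intro b hb
    rw [← Finset.mem_sort (α := ℕ) (· ≤ ·), ← hl] at hb
    obtain ⟨i, hi, hbe⟩ := List.getElem_of_mem hb
    exact ⟨i, hi, by rw [List.getD_eq_getElem _ _ hi, hbe]⟩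
  refine ?_
  set Y : ℕ → ℕ := fun k => l.getD (d + k) 0 with hYdef
  have hYe : ∀ k, Y k = l.getD (d + k) 0 := fun _ => rfl
  have hYmem : ∀ k, k ≤ ℓ → (x', Y k) ∈ T := by
    intro k hk
    exact hmemR _ (hgetR (d + k) (by omega))
  have hmono : ∀ k, k < ℓ → Y k < Y (k+1) := by
    intro k hk
    have e1 := hYe k
    have e2 := hYe (k+1)
    have := hsorted (d+k) (d+(k+1)) (by omega) (by omega)
    omega
  have htop : ∀ b, Y ℓ < b → (x', b) ∉ T := by
    intro b hb hbT
    have eℓ := hYe ℓ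
    have hbR : b ∈ R := by
      simp only [hR, Finset.mem_image, Set.Finite.mem_toFinset, Set.mem_setOf_eq]
      exact ⟨(x', b), ⟨hbT, rfl⟩, rfl⟩
    obtain ⟨i, hi, hbe⟩ := hRidx b hbR
    rcases Nat.lt_or_ge i (d + ℓ) with h | h
    · have := hsorted i (d + ℓ) h (by omega); omega
    · rcases Nat.eq_or_lt_of_le h with h' | h'
      · rw [← h'] at hbe; omega
      · omega
  have hbetw : ∀ k, k < ℓ → ∀ b, Y k < b → b < Y (k+1) → (x', b) ∉ T := by
    intro k hk b hb1 hb2 hbT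
    have e1 := hYe k
    have e2 := hYe (k+1)
    have hbR : b ∈ R := by
      simp only [hR, Finset.mem_image, Set.Finite.mem_toFinset, Set.mem_setOf_eq]
      exact ⟨(x', b), ⟨hbT, rfl⟩, rfl⟩
    obtain ⟨i, hi, hbe⟩ := hRidx b hbR
    rcases Nat.lt_or_ge i (d + k + 1) with h | h
    · rcases Nat.eq_or_lt_of_le (show i ≤ d + k by omega) with h' | h'
      · rw [h'] at hbe; omega
      · have := hsorted i (d + k) h' (by omega); omega
    · rcases Nat.eq_or_lt_of_le (show d + (k+1) ≤ i by omega) with h' | h'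
      · rw [← h'] at hbe; omega
      · have := hsorted (d + (k+1)) i h' hi; omega
  have hrel0 : ν.sum + 1 ≤ x' + Sf ν δ (Y 0) := by
    by_contra hc
    push_neg at hc
    have e0 := hYe 0
    have hsub2 : hRelfin.toFinset.image Prod.snd ⊆
        (Finset.range ℓ).image (fun k => Y (k+1)) := by
      intro b hb
      have hbR := hsubR hb
      simp only [Finset.mem_image, Set.Finite.mem_toFinset, Set.mem_setOf_eq] at hb
      obtain ⟨p, hp, hpe⟩ := hb
      have hpL := (relevant_iff hδ).1 hp.2.2
      have hbY0 : Y 0 < b := by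
        by_contra hc2
        push_neg at hc2
        have hsm := Sf_mono hδ (show b ≤ Y 0 from hc2)
        have h3 := hpL.2.2
        rw [hpe, hp.2.1] at h3
        omega
      obtain ⟨i, hi, hbe⟩ := hRidx b hbR
      have ed : l.getD (d + 0) 0 = l.getD d 0 := rfl
      have hid : d < i := by
        by_contra hc2
        push_neg at hc2
        rcases Nat.eq_or_lt_of_le hc2 with h' | h'
        · rw [h'] at hbe; omega
        · have := hsorted i d h' (by omega); omega
      simp only [Finset.mem_image, Finset.mem_range]
      refine ⟨i - d - 1, by omega, ?_⟩
      have := hYe (i - d - 1 + 1)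
      rw [this, show d + (i - d - 1 + 1) = i by omega, ← hbe]
    have h1 := Finset.card_le_card hsub2
    have h2 := Finset.card_image_le (s := Finset.range ℓ) (f := fun k => Y (k+1))
    rw [Finset.card_range] at h2
    omega
  have hYlrel : ν.sum + 1 ≤ x' + Sf ν δ (Y ℓ) := by
    have h0ℓ : Y 0 ≤ Y ℓ := by
      have e0 := hYe 0
      have eℓ := hYe ℓ
      rcases Nat.eq_or_lt_of_le (Nat.zero_le ℓ) with h | h
      · omega
      · have := hsorted (d + 0) (d + ℓ) (by omega) (by omega); omega
    have := Sf_mono hδ h0ℓ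
    omega
  obtain ⟨a₀, ha₀, ha₀T⟩ := left_nbr hδ hT (hYmem ℓ le_rfl) htop hYlrel hx'1
  obtain ⟨K, hKb, -, hPK, hmax⟩ := findG (P := fun a => a < x' ∧ (a, Y ℓ) ∈ T)
    (n := x' - 1) (m := a₀) (by omega) ⟨ha₀, ha₀T⟩
  refine ⟨K, Y, ⟨hYmem, hmono, hPK.1, hPK.2, htop, hbetw, ?_, hrel0⟩⟩
  intro a ha1 ha2 haT
  have := hmax a (by omega) ⟨ha2, haT⟩
  omega
end Exists
private def Rm (x : ℕ) (Y : ℕ → ℕ) (k : ℕ) : Set (ℕ × ℕ) :=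
  {p | p.1 = x ∧ ∃ j, j < k ∧ p.2 = Y j}
private def Ad (x' : ℕ) (Y : ℕ → ℕ) (k : ℕ) : Set (ℕ × ℕ) :=
  {p | p.1 = x' ∧ ∃ j, 1 ≤ j ∧ j ≤ k ∧ p.2 = Y j}

section Complete
variable {ν δ : List ℕ} {T : Set (ℕ × ℕ)} {ℓ : ℕ}

private lemma complete (hδ : IsIncrement ν δ) (hT : IsDNTree ν δ T) (hℓ : 1 ≤ ℓ)
    {B : Set (ℕ × ℕ)} (hB : IsRightDNItv ν δ B T ℓ) :
    ∃ x' x Y, GoodData ν δ T ℓ x' x Y ∧ B = Ch T x' x Y ℓ 0 := by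
  obtain ⟨hBtree, -, q, ⟨hq1, hq2, hq3, hq4⟩, c, hc0, hcl, hrot⟩ := hB
  set x := (q 0).1 with hx
  set Y : ℕ → ℕ := fun k => (q k).2 with hY
  have hYe : ∀ k, Y k = (q k).2 := fun _ => rfl
  have hqe : ∀ k, k ≤ ℓ → q k = (x, Y k) := fun k hk => Prod.ext (hq2 k hk) rfl
  have Ylt : ∀ {i j : ℕ}, i < j → j ≤ ℓ → Y i < Y j := by
    intro i j hij hj
    induction j with
    | zero => omega
    | succ n ih =>
      rcases Nat.lt_or_ge i n with h | h
      · exact lt_trans (ih h (by omega)) (hq3 n (by omega))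
      · have : i = n := by omega
        subst this; exact hq3 i (by omega)
  have Yle : ∀ {i j : ℕ}, i ≤ j → j ≤ ℓ → Y i ≤ Y j := by
    intro i j hij hj
    rcases Nat.eq_or_lt_of_le hij with h | h
    · rw [h]
    · exact (Ylt h hj).le
  have hq4' : ∀ i, i < ℓ → ∀ s ∈ B, s.1 = x → Y i < s.2 → s.2 < Y (i+1) → False := hq4
  -- step 0
  obtain ⟨p₀, r₀, hp₀c, hq₀c, hr₀c, e₀1, e₀2, e₀3, e₀4, hemp₀, hins₀⟩ := hrot 0 hℓ
  rw [hc0] at hp₀c hq₀c hr₀c hemp₀ hins₀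
  rw [← hx] at e₀1 e₀4 hemp₀
  rw [← hYe 0] at e₀2 e₀3 hemp₀
  set x' := r₀.1 with hx'
  have hxx : x < x' := e₀4
  have hr₀e : r₀ = (x', Y 0) := Prod.ext rfl e₀3
  have hq0B : ∀ k, k ≤ ℓ → (x, Y k) ∈ B := by
    intro k hk
    rw [← hqe k hk]; exact hq1 k hk
  have hp₀e : p₀ = q 1 := by
    have hge : Y 1 ≤ p₀.2 := by
      by_contra hc
      push_neg at hc
      exact hq4' 0 hℓ p₀ hp₀c e₀1 e₀2 hc
    rcases eq_or_lt_of_le hge with he | hlt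
    · exact Prod.ext (by rw [e₀1, hq2 1 hℓ]) he.symm
    · exfalso
      have := hemp₀ (q 1) (hq1 1 hℓ) (le_of_eq (hq2 1 hℓ).symm)
        (by rw [hq2 1 hℓ]; omega) (by rw [← hYe 1]; exact (Ylt (by omega) hℓ).le)
        (by rw [← hYe 1]; omega)
      rcases this with h | h | h
      · rw [← h] at hlt
        have := hYe 1; omega
      · have h2 := congrArg Prod.snd h
        rw [← hYe 1, ← hYe 0] at h2
        have := Ylt (show (0:ℕ) < 1 by omega) hℓ
        omega
      · have h2 := congrArg Prod.fst h
        rw [hq2 1 hℓ, hr₀e] at h2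
        dsimp at h2; omega
  -- the invariant
  have inv : ∀ k, 1 ≤ k → k ≤ ℓ →
      (c k = (B \ Rm x Y k) ∪ Ad x' Y k) ∧
      (∀ j, j < k → ∀ s ∈ B, x ≤ s.1 → s.1 ≤ x' → Y j ≤ s.2 → s.2 ≤ Y (j+1) →
        s = q j ∨ s = q (j+1) ∨ s = r₀) := by
    intro k
    induction k with
    | zero => omega
    | succ n ih =>
      intro _hdum hnl
      rcases Nat.eq_or_lt_of_le (show 1 ≤ n + 1 by omega) with h1 | h1
      · -- base case n + 1 = 1
        have hn0 : n = 0 := by omega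
        subst hn0
        constructor
        · rw [hins₀, hp₀e]
          ext s
          simp only [Set.mem_insert_iff, Set.mem_diff, Set.mem_singleton_iff,
            Set.mem_union, Rm, Ad, Set.mem_setOf_eq]
          constructor
          · rintro (he | ⟨hsB, hsq⟩)
            · right
              refine ⟨by rw [he], 1, le_rfl, le_rfl, by rw [he, hYe 1]⟩
            · left
              refine ⟨hsB, ?_⟩
              rintro ⟨hs1, j, hj, hs2⟩
              have : j = 0 := by omega
              subst this
              exact hsq (by rw [hqe 0 (by omega)]; exact Prod.ext hs1 hs2)
          · rintro (⟨hsB, hsrm⟩ | ⟨hs1, j, hj1, hj2, hs2⟩)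
            · right
              refine ⟨hsB, fun he => hsrm ⟨by rw [he, hqe 0 (by omega)], 0, by omega,
                by rw [he, hqe 0 (by omega)]⟩⟩
            · have : j = 1 := by omega
              subst this
              left
              exact Prod.ext hs1 (by rw [hs2, hYe 1])
        · intro j hj s hsB hs1 hs2 hs3 hs4
          have : j = 0 := by omega
          subst this
          have := hemp₀ s hsB hs1 hs2 hs3 (by rw [hp₀e]; exact hs4)
          rcases this with h | h | h
          · right; left; rw [h, hp₀e]
          · left; exact h
          · right; right; exact h
      · -- inductive step: 1 ≤ n, n < ℓ
        have hn1 : 1 ≤ n := by omega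
        have hnℓ : n < ℓ := by omega
        obtain ⟨hI1, hI2⟩ := ih hn1 (by omega)
        have hnoB : ∀ j, 1 ≤ j → j ≤ n → ∀ a, x < a → a ≤ x' → (a, Y j) ∉ B := by
          intro j hj1 hj2 a ha1 ha2 haB
          have := hI2 (j-1) (by omega) (a, Y j) haB (by dsimp only; omega) ha2
            (by dsimp only; exact Yle (by omega) (by omega))
            (by dsimp only; rw [show j - 1 + 1 = j by omega])
          rcases this with h | h | h
          · have h2 := congrArg Prod.fst h
            rw [hq2 (j-1) (by omega)] at h2
            dsimp at h2; omega
          · have h2 := congrArg Prod.fst h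
            rw [hq2 (j-1+1) (by omega)] at h2
            dsimp at h2; omega
          · rw [hr₀e] at h
            have h2 := congrArg Prod.snd h
            dsimp at h2
            have := Ylt (show 0 < j by omega) (by omega)
            omega
        obtain ⟨p, r, hpc, hqc, hrc, e1, e2, e3, e4, hemp, hins⟩ := hrot n hnℓ
        rw [hq2 n (by omega)] at e1 e4 hemp
        rw [← hYe n] at e2 e3 hemp
        rw [hI1] at hpc hqc hrc hemp hins
        have hqck : ∀ j, n ≤ j → j ≤ ℓ → q j ∈ (B \ Rm x Y n) ∪ Ad x' Y n := by
          intro j hjn hj2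
          left
          refine ⟨hq1 j hj2, ?_⟩
          rintro ⟨-, j', hj', hj'2⟩
          rw [← hYe j] at hj'2
          rcases Nat.lt_trichotomy j' j with h | h | h
          · have := Ylt h hj2; omega
          · omega
          · have := Ylt h (by omega); omega
        have hscn : ((x' : ℕ), Y n) ∈ (B \ Rm x Y n) ∪ Ad x' Y n :=
          Or.inr ⟨rfl, n, hn1, le_rfl, rfl⟩
        have hpe : p = q (n+1) := by
          have hpB : p ∈ B := by
            rcases hpc with ⟨h, -⟩ | ⟨h, -⟩
            · exact h
            · exfalso; rw [e1] at h; omega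
          have hge : Y (n+1) ≤ p.2 := by
            by_contra hc
            push_neg at hc
            exact hq4' n hnℓ p hpB e1 e2 hc
          rcases eq_or_lt_of_le hge with he | hlt
          · exact Prod.ext (by rw [e1, hq2 (n+1) hnl]) he.symm
          · exfalso
            have := hemp (q (n+1)) (hqck (n+1) (by omega) hnl) (le_of_eq (hq2 (n+1) hnl).symm)
              (by rw [hq2 (n+1) hnl]; omega)
              (by rw [← hYe (n+1)]; exact (Ylt (by omega) hnl).le)
              (by rw [← hYe (n+1)]; omega)
            rcases this with h | h | h
            · rw [← h] at hlt
              have := hYe (n+1); omega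
            · have h2 := congrArg Prod.snd h
              rw [← hYe (n+1), ← hYe n] at h2
              have := Ylt (show n < n+1 by omega) hnl
              omega
            · have h2 := congrArg Prod.fst h
              rw [hq2 (n+1) hnl] at h2
              omega
        have hre : r = ((x' : ℕ), Y n) := by
          rcases hrc with ⟨hrB, -⟩ | ⟨hr1, j, hj1, hj2, hr2⟩
          · exfalso
            have hrx' : x' < r.1 := by
              rcases Nat.lt_or_ge x' r.1 with h | h
              · exact h
              · exfalso
                exact hnoB n hn1 le_rfl r.1 e4 h
                  (by have hre2 : r = (r.1, Y n) := Prod.ext rfl e3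
                      rwa [hre2] at hrB)
            have := hemp ((x' : ℕ), Y n) hscn (by dsimp only; omega)
              (by dsimp only; omega) le_rfl (by
                dsimp only
                rw [hpe, ← hYe (n+1)]
                exact (Ylt (show n < n+1 by omega) hnl).le)
            rcases this with h | h | h
            · rw [hpe] at h
              have h2 := congrArg Prod.fst h
              rw [hq2 (n+1) hnl] at h2
              dsimp at h2; omega
            · have h2 := congrArg Prod.fst h
              rw [hq2 n (by omega)] at h2
              dsimp at h2; omega
            · have h2 := congrArg Prod.fst h
              dsimp at h2; omega
          · have hYeq : Y j = Y n := by rw [← hr2, e3]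
            have : j = n := by
              rcases Nat.lt_trichotomy j n with h | h | h
              · have := Ylt h (by omega); omega
              · exact h
              · omega
            subst this
            exact Prod.ext hr1 (by rw [hr2])
        refine ⟨?_, ?_⟩
        · rw [hins, hpe, hre]
          ext s
          simp only [Set.mem_insert_iff, Set.mem_diff, Set.mem_singleton_iff,
            Set.mem_union, Rm, Ad, Set.mem_setOf_eq]
          constructor
          · rintro (he | ⟨hs, hsq⟩)
            · right
              exact ⟨by rw [he], n+1, by omega, le_rfl, by rw [he, hYe (n+1)]⟩
            · rcases hs with ⟨hsB, hsrm⟩ | ⟨hs1, j, hj1, hj2, hs2⟩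
              · left
                refine ⟨hsB, ?_⟩
                rintro ⟨hs1, j, hj, hs2⟩
                rcases Nat.lt_or_ge j n with h | h
                · exact hsrm ⟨hs1, j, h, hs2⟩
                · refine hsq (by rw [hqe n (by omega)]; refine Prod.ext hs1 ?_; rw [hs2]
                                 congr 1; omega)
              · exact Or.inr ⟨hs1, j, hj1, by omega, hs2⟩
          · rintro (⟨hsB, hsrm⟩ | ⟨hs1, j, hj1, hj2, hs2⟩)
            · right
              refine ⟨Or.inl ⟨hsB, ?_⟩, ?_⟩
              · rintro ⟨h1, j, hj, h2⟩
                exact hsrm ⟨h1, j, by omega, h2⟩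
              · intro he
                exact hsrm ⟨by rw [he, hqe n (by omega)], n, by omega,
                  by rw [he, hqe n (by omega)]⟩
            · rcases Nat.eq_or_lt_of_le hj2 with h | h
              · left
                refine Prod.ext hs1 ?_
                have hYj : Y j = Y (n+1) := by rw [h]
                rw [hs2, hYj, hYe (n+1)]
              · right
                refine ⟨Or.inr ⟨hs1, j, hj1, by omega, hs2⟩, ?_⟩
                intro he
                have h2 := congrArg Prod.fst he
                rw [hqe n (by omega)] at he
                have h3 := congrArg Prod.fst he
                dsimp at h3; omega
        · intro j hj s hsB hs1 hs2 hs3 hs4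
          rcases Nat.lt_or_ge j n with h | h
          · exact hI2 j h s hsB hs1 hs2 hs3 hs4
          · have hjn : j = n := by omega
            subst hjn
            have hscnB : s ∈ (B \ Rm x Y j) ∪ Ad x' Y j := by
              left
              refine ⟨hsB, ?_⟩
              rintro ⟨hsx, j', hj', hsy⟩
              have := Ylt (show j' < j by omega) (by omega)
              omega
            have := hemp s hscnB hs1 (by rw [hre]; exact hs2) hs3
              (by rw [hpe, ← hYe (j+1)]; exact hs4)
            rcases this with h | h | h
            · right; left; rw [h, hpe]
            · left; exact h
            · exfalso
              rw [hre] at h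
              have : ((x' : ℕ), Y j) ∈ B := by rw [← h]; exact hsB
              exact hnoB j hn1 le_rfl x' hxx le_rfl this
  -- conclude
  obtain ⟨hI1, hI2⟩ := inv ℓ hℓ le_rfl
  rw [hcl] at hI1
  have hnoB : ∀ j, 1 ≤ j → j ≤ ℓ → ∀ a, x < a → a ≤ x' → (a, Y j) ∉ B := by
    intro j hj1 hj2 a ha1 ha2 haB
    have := hI2 (j-1) (by omega) (a, Y j) haB (by dsimp only; omega) ha2
      (by dsimp only; exact Yle (by omega) (by omega))
      (by dsimp only; rw [show j - 1 + 1 = j by omega])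
    rcases this with h | h | h
    · have h2 := congrArg Prod.fst h
      rw [hq2 (j-1) (by omega)] at h2
      dsimp at h2; omega
    · have h2 := congrArg Prod.fst h
      rw [hq2 (j-1+1) (by omega)] at h2
      dsimp at h2; omega
    · rw [hr₀e] at h
      have h2 := congrArg Prod.snd h
      dsimp at h2
      have := Ylt (show 0 < j by omega) (by omega)
      omega
  have hmemS : ∀ k, k ≤ ℓ → ((x' : ℕ), Y k) ∈ T := by
    intro k hk
    rcases Nat.eq_or_lt_of_le (Nat.zero_le k) with h | h
    · rw [hI1, ← h, ← hr₀e]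
      left
      refine ⟨hr₀c, ?_⟩
      rintro ⟨h1, -⟩
      rw [hr₀e] at h1
      dsimp at h1; omega
    · rw [hI1]
      right
      exact ⟨rfl, k, by omega, hk, rfl⟩
  have hmemQ : ((x : ℕ), Y ℓ) ∈ T := by
    rw [hI1]
    left
    refine ⟨hq0B ℓ le_rfl, ?_⟩
    rintro ⟨-, j, hj, h2⟩
    dsimp at h2
    have := Ylt hj le_rfl
    omega
  have hq0L := hBtree.1 (hq0B 0 (by omega))
  rw [mem_Ldn] at hq0L
  dsimp only at hq0L
  have hsℓL := hT.1 (hmemS ℓ le_rfl)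
  rw [mem_Ldn] at hsℓL
  dsimp only at hsℓL
  have hqℓL := hBtree.1 (hq0B ℓ le_rfl)
  rw [mem_Ldn] at hqℓL
  dsimp only at hqℓL
  have G : GoodData ν δ T ℓ x' x Y := by
    refine ⟨hmemS, hq3, hxx, hmemQ, ?_, ?_, ?_, ?_⟩
    · -- top
      intro b hb hbT
      rw [hI1] at hbT
      rcases hbT with ⟨hbB, -⟩ | ⟨-, j, hj1, hj2, h2⟩
      · exact hBtree.2.1 _ (hq0B ℓ le_rfl) _ hbB
          (incomp_sw hδ (p := ((x : ℕ), Y ℓ)) (q := ((x' : ℕ), b)) hxx hb hqℓL.1 hsℓL.2.2)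
      · dsimp at h2
        have := Yle hj2 le_rfl
        omega
    · -- betw
      intro k hk b hb1 hb2 hbT
      rw [hI1] at hbT
      rcases hbT with ⟨hbB, -⟩ | ⟨-, j, hj1, hj2, h2⟩
      · have := hI2 k hk ((x' : ℕ), b) hbB (by dsimp only; omega) le_rfl
          (by dsimp only; omega) (by dsimp only; omega)
        rcases this with h | h | h
        · have h2 := congrArg Prod.fst h
          rw [hq2 k (by omega)] at h2
          dsimp at h2; omega
        · have h2 := congrArg Prod.fst h
          rw [hq2 (k+1) (by omega)] at h2
          dsimp at h2; omega
        · rw [hr₀e] at h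
          have h2 := congrArg Prod.snd h
          dsimp at h2
          have : Y 0 ≤ Y k := Yle (Nat.zero_le k) (by omega)
          omega
      · dsimp at h2
        have hkj : k < j := by
          by_contra hc; push_neg at hc
          have := Yle hc (by omega); omega
        have hjk : j < k + 1 := by
          by_contra hc; push_neg at hc
          have := Yle hc hj2; omega
        omega
    · -- row
      intro a ha1 ha2 haT
      rw [hI1] at haT
      rcases haT with ⟨haB, -⟩ | ⟨h1, -⟩
      · have := hI2 (ℓ-1) (by omega) ((a : ℕ), Y ℓ) haB (by dsimp only; omega)
          (by dsimp only; omega) (by dsimp only; exact Yle (by omega) le_rfl)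
          (by dsimp only; rw [show ℓ - 1 + 1 = ℓ by omega])
        rcases this with h | h | h
        · have h2 := congrArg Prod.fst h
          rw [hq2 (ℓ-1) (by omega)] at h2
          dsimp at h2; omega
        · have h2 := congrArg Prod.fst h
          rw [hq2 (ℓ-1+1) (by omega)] at h2
          dsimp at h2; omega
        · rw [hr₀e] at h
          have h2 := congrArg Prod.snd h
          dsimp at h2
          have := Ylt (show 0 < ℓ by omega) le_rfl
          omega
      · dsimp at h1; omega
    · -- rel0
      omega
  refine ⟨x', x, Y, G, ?_⟩
  have hRmQ : Rm x Y ℓ = QSt x Y 0 ℓ := by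
    ext s
    simp only [Rm, QSt, Set.mem_setOf_eq]
    constructor
    · rintro ⟨h1, j, hj, h2⟩; exact ⟨h1, j, by omega, hj, h2⟩
    · rintro ⟨h1, j, -, hj, h2⟩; exact ⟨h1, j, hj, h2⟩
  have hAdS : Ad x' Y ℓ = SSt x' Y 0 ℓ := by
    ext s
    simp only [Ad, SSt, Set.mem_setOf_eq]
    constructor
    · rintro ⟨h1, j, hj1, hj2, h2⟩; exact ⟨h1, j, by omega, hj2, h2⟩
    · rintro ⟨h1, j, hj1, hj2, h2⟩; exact ⟨h1, j, by omega, hj2, h2⟩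
  rw [hRmQ, hAdS] at hI1
  ext s
  simp only [Ch, Set.mem_union, Set.mem_diff]
  constructor
  · intro hsB
    by_cases hsQ : s ∈ QSt x Y 0 ℓ
    · exact Or.inr hsQ
    · left
      refine ⟨?_, ?_⟩
      · rw [hI1]
        exact Or.inl ⟨hsB, fun h => hsQ (by rwa [← hRmQ] at h ⊢ <;> rwa [hRmQ])⟩
      · intro hsS
        obtain ⟨h1, j, hj1, hj2, h2⟩ := hsS
        have hse : s = ((x' : ℕ), Y j) := Prod.ext h1 h2
        rw [hse] at hsB
        exact hnoB j (by omega) hj2 x' hxx le_rfl hsB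
  · rintro (⟨hsT, hsS⟩ | hsQ)
    · rw [hI1] at hsT
      rcases hsT with ⟨hsB, -⟩ | hsS'
      · exact hsB
      · exact absurd hsS' hsS
    · obtain ⟨h1, j, -, hj2, h2⟩ := hsQ
      have hse : s = ((x : ℕ), Y j) := Prod.ext h1 h2
      rw [hse]
      exact hq0B j hj2.le
end Complete
section Unique
variable {ν δ : List ℕ} {T : Set (ℕ × ℕ)} {ℓ x' x₁ x₂ : ℕ} {Y₁ Y₂ : ℕ → ℕ}

private lemma unique_good (G1 : GoodData ν δ T ℓ x' x₁ Y₁) (G2 : GoodData ν δ T ℓ x' x₂ Y₂) :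
    x₁ = x₂ ∧ ∀ k, k ≤ ℓ → Y₁ k = Y₂ k := by
  have hYℓ : Y₁ ℓ = Y₂ ℓ := by
    rcases Nat.lt_trichotomy (Y₁ ℓ) (Y₂ ℓ) with h | h | h
    · exact absurd (G2.memS ℓ le_rfl) (G1.top (Y₂ ℓ) h)
    · exact h
    · exact absurd (G1.memS ℓ le_rfl) (G2.top (Y₁ ℓ) h)
  have hdesc : ∀ d, d ≤ ℓ → Y₁ (ℓ - d) = Y₂ (ℓ - d) := by
    intro d
    induction d with
    | zero => intro _; simpa using hYℓ
    | succ n ih =>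
      intro hd
      have ihn := ih (by omega)
      have hk1 : ℓ - (n+1) + 1 = ℓ - n := by omega
      have hkℓ : ℓ - (n+1) < ℓ := by omega
      have hY12 : Y₁ (ℓ - (n+1) + 1) = Y₂ (ℓ - (n+1) + 1) := by rw [hk1]; exact ihn
      rcases Nat.lt_trichotomy (Y₁ (ℓ - (n+1))) (Y₂ (ℓ - (n+1))) with h | h | h
      · exfalso
        have h2 : Y₂ (ℓ - (n+1)) < Y₁ (ℓ - (n+1) + 1) := by
          rw [hY12]; exact G2.mono _ hkℓ
        exact G1.betw _ hkℓ (Y₂ (ℓ - (n+1))) h h2 (G2.memS _ (by omega))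
      · exact h
      · exfalso
        have h2 : Y₁ (ℓ - (n+1)) < Y₂ (ℓ - (n+1) + 1) := by
          rw [← hY12]; exact G1.mono _ hkℓ
        exact G2.betw _ hkℓ (Y₁ (ℓ - (n+1))) h h2 (G1.memS _ (by omega))
  have hYeq : ∀ k, k ≤ ℓ → Y₁ k = Y₂ k := by
    intro k hk
    have := hdesc (ℓ - k) (by omega)
    rwa [show ℓ - (ℓ - k) = k by omega] at this
  refine ⟨?_, hYeq⟩
  have hYl := hYeq ℓ le_rfl
  rcases Nat.lt_trichotomy x₁ x₂ with h | h | h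
  · exfalso
    have := G2.memQ
    rw [← hYl] at this
    exact G1.row x₂ h G2.hxx this
  · exact h
  · exfalso
    have := G1.memQ
    rw [hYl] at this
    exact G2.row x₁ h G1.hxx this

private lemma Ch_congr (hYeq : ∀ k, k ≤ ℓ → Y₁ k = Y₂ k) :
    Ch T x' x₁ Y₁ ℓ 0 = Ch T x' x₁ Y₂ ℓ 0 := by
  have hS : SSt x' Y₁ 0 ℓ = SSt x' Y₂ 0 ℓ := by
    ext s
    simp only [SSt, Set.mem_setOf_eq]
    constructor
    · rintro ⟨h1, i, hi1, hi2, h2⟩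
      exact ⟨h1, i, hi1, hi2, by rw [h2, hYeq i hi2]⟩
    · rintro ⟨h1, i, hi1, hi2, h2⟩
      exact ⟨h1, i, hi1, hi2, by rw [h2, hYeq i hi2]⟩
  have hQ : QSt x₁ Y₁ 0 ℓ = QSt x₁ Y₂ 0 ℓ := by
    ext s
    simp only [QSt, Set.mem_setOf_eq]
    constructor
    · rintro ⟨h1, i, hi1, hi2, h2⟩
      exact ⟨h1, i, hi1, hi2, by rw [h2, hYeq i hi2.le]⟩
    · rintro ⟨h1, i, hi1, hi2, h2⟩
      exact ⟨h1, i, hi1, hi2, by rw [h2, hYeq i hi2.le]⟩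
  rw [Ch, Ch, hS, hQ]
end Unique


/-- Let `T` be a (δ,ν)-tree with reduced column vector
`c̄_δ(T) = (c̄_0, …, c̄_{m−1})`.  The number of right intervals of length
`ℓ ≥ 1` with top element `T` in the rotation poset of (δ,ν)-trees equals
`|{0 ≤ i ≤ m−1 : c̄_i ≥ ℓ}|`. -/
theorem dn_right_interval_count (ν δ : List ℕ) (hν : ν ≠ []) (hδ : IsIncrement ν δ)
    (j : ℕ → ℕ) (hj : RColOrder ν δ j)
    (T : Set (ℕ × ℕ)) (hT : IsDNTree ν δ T)
    (c : List ℕ) (hc : c.length = ν.sum)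
    (hcol : ∀ i, i < ν.sum → rcolTN ν δ T (j i) = c.getD i 0 + 1)
    (ℓ : ℕ) (hℓ : 1 ≤ ℓ) :
    {B : Set (ℕ × ℕ) | IsRightDNItv ν δ B T ℓ}.ncard =
      ((Finset.range ν.sum).filter (fun i => ℓ ≤ c.getD i 0)).card := by
  classical
  set Q : Finset ℕ := (Finset.Icc 1 ν.sum).filter (fun y => ℓ + 1 ≤ rcolTN ν δ T y) with hQdef
  set f : Set (ℕ × ℕ) → ℕ := fun B => sSup {a | ∃ b, (a, b) ∈ T ∧ (a, b) ∉ B} with hfdef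
  have hfB : ∀ {B : Set (ℕ × ℕ)} {x' x : ℕ} {Y : ℕ → ℕ}, GoodData ν δ T ℓ x' x Y →
      B = Ch T x' x Y ℓ 0 → f B = x' := by
    intro B x' x Y G hBe
    have hTdiff := TdiffB hT G
    have hset : {a | ∃ b, (a, b) ∈ T ∧ (a, b) ∉ B} = {x'} := by
      ext a
      simp only [Set.mem_setOf_eq, Set.mem_singleton_iff]
      constructor
      · rintro ⟨b, hb1, hb2⟩
        rw [hBe] at hb2
        have : ((a : ℕ), b) ∈ T \ Ch T x' x Y ℓ 0 := ⟨hb1, hb2⟩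
        rw [hTdiff] at this
        exact this.1
      · rintro rfl
        refine ⟨Y 1, G.memS 1 hℓ, ?_⟩
        rw [hBe]
        exact sset_not_mem_B le_rfl hℓ G.hxx
    rw [hfdef]
    dsimp only
    rw [hset, csSup_singleton]
  have himg : f '' {B | IsRightDNItv ν δ B T ℓ} = ↑Q := by
    ext y
    constructor
    · rintro ⟨B, hB, rfl⟩
      obtain ⟨x', x, Y, G, hBe⟩ := complete hδ hT hℓ hB
      rw [hfB G hBe]
      have h1 : 1 ≤ x' := by have := G.hxx; omega
      have h2 : x' ≤ ν.sum :=
        le_trans (x'_le_Af hT G (Nat.zero_le ℓ)) (Af_le_m hδ _)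
      simp only [hQdef, Finset.coe_filter, Set.mem_setOf_eq, Finset.mem_Icc]
      exact ⟨⟨h1, h2⟩, good_rcol hδ hT G⟩
    · intro hy
      simp only [hQdef, Finset.coe_filter, Set.mem_setOf_eq, Finset.mem_Icc] at hy
      obtain ⟨⟨h1, h2⟩, h3⟩ := hy
      obtain ⟨x, Y, G⟩ := exists_good hδ hT hℓ h1 h3
      exact ⟨Ch T y x Y ℓ 0, constr hδ hT G hℓ, hfB G rfl⟩
  have hinj : Set.InjOn f {B | IsRightDNItv ν δ B T ℓ} := by
    intro B1 h1 B2 h2 he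
    obtain ⟨x1', xa, Ya, G1, hB1⟩ := complete hδ hT hℓ h1
    obtain ⟨x2', xb, Yb, G2, hB2⟩ := complete hδ hT hℓ h2
    have e1 := hfB G1 hB1
    have e2 := hfB G2 hB2
    have hxe : x1' = x2' := by rw [← e1, ← e2, he]
    subst hxe
    obtain ⟨hx, hY⟩ := unique_good G1 G2
    rw [hB1, hB2, ← hx, Ch_congr hY]
  have hstepA : {B : Set (ℕ × ℕ) | IsRightDNItv ν δ B T ℓ}.ncard = Q.card := by
    calc {B : Set (ℕ × ℕ) | IsRightDNItv ν δ B T ℓ}.ncard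
        = (f '' {B | IsRightDNItv ν δ B T ℓ}).ncard := (Set.ncard_image_of_injOn hinj).symm
      _ = (↑Q : Set ℕ).ncard := by rw [himg]
      _ = Q.card := Set.ncard_coe_finset Q
  rw [hstepA]
  -- step B : card bijection with the index set
  have himgj : (Finset.range ν.sum).image j = Finset.Icc 1 ν.sum := by
    apply Finset.eq_of_subset_of_card_le
    · intro y hy
      simp only [Finset.mem_image, Finset.mem_range] at hy
      obtain ⟨i, hi, rfl⟩ := hy
      exact Finset.mem_Icc.2 ⟨(hj.1 i hi).1, (hj.1 i hi).2⟩
    · rw [Finset.card_image_of_injOn, Finset.card_range, Nat.card_Icc]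
      · omega
      · intro a ha b hb hab
        simp only [Finset.coe_range, Set.mem_Iio] at ha hb
        exact hj.2.1 a b ha hb hab
  symm
  apply Finset.card_bij (fun i _ => j i)
  · intro i hi
    simp only [Finset.mem_filter, Finset.mem_range] at hi
    simp only [hQdef, Finset.mem_filter, Finset.mem_Icc]
    have hji := hj.1 i hi.1
    have := hcol i hi.1
    exact ⟨⟨hji.1, hji.2⟩, by omega⟩
  · intro a ha b hb hab
    simp only [Finset.mem_filter, Finset.mem_range] at ha hb
    exact hj.2.1 a b ha.1 hb.1 hab
  · intro y hy
    simp only [hQdef, Finset.mem_filter, Finset.mem_Icc] at hy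
    have : y ∈ (Finset.range ν.sum).image j := by
      rw [himgj]; exact Finset.mem_Icc.2 hy.1
    simp only [Finset.mem_image, Finset.mem_range] at this
    obtain ⟨i, hi, rfl⟩ := this
    refine ⟨i, ?_, rfl⟩
    simp only [Finset.mem_filter, Finset.mem_range]
    have := hcol i hi
    have := hy.2
    exact ⟨hi, by omega⟩
end
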